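/- arXiv:2109.06718 — 6 statements merged into one kernel-verified Lean document; each statement's English description precedes it below -/
import Mathlib

section
/- For complex numbers x_1,...,x_M, y_1,...,y_M, s_1,...,s_M (with all denominators nonzero), the M×M determinant det[ (1/(y_{M-j+1} - x_i)) * ∏_{m=1}^{M-j} (y_m - s_m^2 x_i)/(s_m^2 (y_m - x_i)) ]_{i,j=1}^M equals ∏_{1≤i<j≤M} (x_i - x_j)(s_i^{-2} y_i - y_j) / ∏_{i,j=1}^M (y_i - x_j). -/
open Finset

private lemma prod_Icc_bot {β : Type*} [CommMonoid β] {p q : ℕ} (h : p ≤ q) (f : ℕ → β) :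
    ∏ m ∈ Icc p q, f m = f p * ∏ m ∈ Icc (p + 1) q, f m := by
  have hins : Icc p q = insert p (Icc (p + 1) q) := by
    ext t; simp only [mem_Icc, mem_insert]; omega
  rw [hins, prod_insert (by simp)]

private lemma prod_Icc_shift {β : Type*} [CommMonoid β] (p q : ℕ) (f : ℕ → β) :
    ∏ m ∈ Icc (p + 1) (q + 1), f m = ∏ m ∈ Icc p q, f (m + 1) := by
  rw [← Finset.map_add_right_Icc p q 1, Finset.prod_map]
  rfl

private lemma prod_range_eq_Icc {β : Type*} [CommMonoid β] (n : ℕ) (f : ℕ → β) :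
    ∏ m ∈ Finset.range n, f (m + 1) = ∏ m ∈ Icc 1 n, f m := by
  rw [← Finset.Ico_add_one_right_eq_Icc, Finset.prod_Ico_eq_prod_range]
  simp [add_comm]

private lemma key : ∀ (M : ℕ) (x a b : ℕ → ℂ),
    (∀ i ∈ Icc 1 M, ∀ j ∈ Icc 1 M, b i ≠ x j) →
    Matrix.det (Matrix.of fun i j : Fin M =>
        (∏ m ∈ Icc 1 (M - 1 - (j : ℕ)), (a m - x ((i : ℕ) + 1))) /
          ∏ m ∈ Icc 1 (M - (j : ℕ)), (b m - x ((i : ℕ) + 1))) =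
      (∏ i ∈ Icc 1 M, ∏ j ∈ Icc (i + 1) M, (x i - x j) * (a i - b j)) /
        ∏ i ∈ Icc 1 M, ∏ j ∈ Icc 1 M, (b i - x j) := by
  intro M
  induction M with
  | zero => intro x a b h; simp
  | succ M ih =>
    intro x a b hbx
    have hbx' : ∀ i ∈ Icc 1 (M+1), ∀ j ∈ Icc 1 (M+1), b i - x j ≠ 0 := by
      intro i hi j hj; exact sub_ne_zero.mpr (hbx i hi j hj)
    set A : Matrix (Fin (M+1)) (Fin (M+1)) ℂ := Matrix.of fun i j =>
      (∏ m ∈ Icc 1 (M + 1 - 1 - (j : ℕ)), (a m - x ((i : ℕ) + 1))) /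
        ∏ m ∈ Icc 1 (M + 1 - (j : ℕ)), (b m - x ((i : ℕ) + 1)) with hAdef
    set γ : ℕ → ℂ := fun k => (a (M - k) - x (M+1)) / (b (M + 1 - k) - x (M+1)) with hγdef
    set T : Matrix (Fin (M+1)) (Fin (M+1)) ℂ := Matrix.of fun j' j =>
      (if j' = j then 1 else 0) + (if (j' : ℕ) = (j : ℕ) + 1 then -γ (j : ℕ) else 0) with hTdef
    set B : Matrix (Fin (M+1)) (Fin (M+1)) ℂ := Matrix.of fun i j =>
      if (j : ℕ) = M then (b 1 - x ((i : ℕ) + 1))⁻¹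
      else ((∏ m ∈ Icc 1 (M - 1 - (j : ℕ)), (a m - x ((i : ℕ) + 1))) /
            ∏ m ∈ Icc 1 (M + 1 - (j : ℕ)), (b m - x ((i : ℕ) + 1))) *
          ((a (M - (j : ℕ)) - b (M + 1 - (j : ℕ))) * (x ((i : ℕ) + 1) - x (M + 1)) /
            (b (M + 1 - (j : ℕ)) - x (M + 1))) with hBdef
    have hdetT : T.det = 1 := by
      have htri : T.BlockTriangular OrderDual.toDual := by
        intro j' j h
        have h' : j' < j := h
        have h1 : j' ≠ j := ne_of_lt h'
        have h2 : (j' : ℕ) ≠ (j : ℕ) + 1 := by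
          have := Fin.lt_iff_val_lt_val.mp h'; omega
        simp [hTdef, h1, h2]
      rw [Matrix.det_of_lowerTriangular T htri]
      have : ∀ j : Fin (M+1), T j j = 1 := by
        intro j; simp [hTdef]
      simp [Matrix.diag, this]
    have hAT : A * T = B := by
      ext i j
      rw [Matrix.mul_apply]
      have hsum : ∀ j' : Fin (M+1), A i j' * T j' j =
          (if j' = j then A i j' else 0) +
            (if (j' : ℕ) = (j : ℕ) + 1 then A i j' * (-γ (j : ℕ)) else 0) := by
        intro j'
        simp only [hTdef, Matrix.of_apply, mul_add]
        congr 1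
        · by_cases h : j' = j <;> simp [h]
        · by_cases h : (j' : ℕ) = (j : ℕ) + 1 <;> simp [h]
      simp only [hsum]
      rw [Finset.sum_add_distrib, Finset.sum_ite_eq' Finset.univ j (fun j' => A i j')]
      simp only [mem_univ, if_true]
      by_cases hj : (j : ℕ) = M
      · have h2 : (∑ j' : Fin (M+1), if (j' : ℕ) = (j : ℕ) + 1 then A i j' * (-γ (j : ℕ)) else 0) = 0 := by
          apply Finset.sum_eq_zero
          intro j' _
          have : (j' : ℕ) ≠ (j : ℕ) + 1 := by have := j'.isLt; omega
          rw [if_neg this]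
        rw [h2, add_zero]
        have hj0 : M + 1 - 1 - (j : ℕ) = 0 := by omega
        have hj1 : M + 1 - (j : ℕ) = 1 := by omega
        simp [hAdef, hBdef, hj, hj0, hj1]
      · have hjM : (j : ℕ) < M := by have := j.isLt; omega
        set j1 : Fin (M+1) := ⟨(j : ℕ) + 1, by omega⟩ with hj1def
        have h2 : (∑ j' : Fin (M+1), if (j' : ℕ) = (j : ℕ) + 1 then A i j' * (-γ (j : ℕ)) else 0)
            = A i j1 * (-γ (j : ℕ)) := by
          rw [Finset.sum_eq_single j1]
          · simp [hj1def]
          · intro j' _ hne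
            have : (j' : ℕ) ≠ (j : ℕ) + 1 := by
              intro h; exact hne (Fin.ext (by simp [hj1def, h]))
            rw [if_neg this]
          · intro h; exact absurd (mem_univ j1) h
        rw [h2]
        have e1 : M + 1 - 1 - (j : ℕ) = (M - 1 - (j : ℕ)) + 1 := by omega
        have e2 : M + 1 - (j : ℕ) = (M - (j : ℕ)) + 1 := by omega
        have e3 : M + 1 - 1 - ((j : ℕ) + 1) = M - 1 - (j : ℕ) := by omega
        have e4 : M + 1 - ((j : ℕ) + 1) = M - (j : ℕ) := by omega
        have e5 : (M - 1 - (j : ℕ)) + 1 = M - (j : ℕ) := by omega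
        have e6 : (M - (j : ℕ)) + 1 = M + 1 - (j : ℕ) := by omega
        simp only [hAdef, hBdef, Matrix.of_apply, hj1def, if_neg hj]
        rw [e1, e2, Finset.prod_Icc_succ_top (by omega), Finset.prod_Icc_succ_top (by omega),
          e3, e4, e5, e6]
        have hbk1 : b (M + 1 - (j : ℕ)) - x ((i : ℕ) + 1) ≠ 0 := by
          apply hbx' _ (by simp; omega) _ (by have := i.isLt; simp; omega)
        have hbk2 : b (M + 1 - (j : ℕ)) - x (M + 1) ≠ 0 := by
          apply hbx' _ (by simp; omega) _ (by simp)
        have hD : (∏ m ∈ Icc 1 (M - (j : ℕ)), (b m - x ((i : ℕ) + 1))) ≠ 0 := by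
          apply Finset.prod_ne_zero_iff.mpr
          intro m hm
          simp only [mem_Icc] at hm
          apply hbx' _ (by simp; omega) _ (by have := i.isLt; simp; omega)
        rw [hγdef]
        field_simp
        ring
    have h1 : A.det = B.det := by
      rw [← hAT, Matrix.det_mul, hdetT, mul_one]
    -- Laplace expansion of B along last row
    have hlastrow : ∀ j : Fin (M+1), j ≠ Fin.last M → B (Fin.last M) j = 0 := by
      intro j hj
      have hjv : (j : ℕ) ≠ M := fun h => hj (Fin.ext (by simp [h]))
      simp [hBdef, hjv, Fin.val_last]
    set Bm : Matrix (Fin M) (Fin M) ℂ := B.submatrix Fin.castSucc Fin.castSucc with hBm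
    have hdetB : B.det = (b 1 - x (M + 1))⁻¹ * Bm.det := by
      rw [Matrix.det_succ_row B (Fin.last M), Finset.sum_eq_single (Fin.last M)]
      · have hBll : B (Fin.last M) (Fin.last M) = (b 1 - x (M + 1))⁻¹ := by
          simp [hBdef, Fin.val_last]
        have hpow : ((-1 : ℂ)) ^ ((Fin.last M : ℕ) + (Fin.last M : ℕ)) = 1 :=
          Even.neg_one_pow ⟨M, by simp [Fin.val_last]⟩
        rw [hBll, hpow, one_mul, Fin.succAbove_last, hBm]
      · intro j _ hj
        rw [hlastrow j hj, mul_zero, zero_mul]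
      · intro h; exact absurd (mem_univ _) h
    -- factor the minor
    set r : Fin M → ℂ := fun i => (x ((i : ℕ) + 1) - x (M + 1)) / (b 1 - x ((i : ℕ) + 1)) with hrdef
    set c : Fin M → ℂ := fun j =>
      (a (M - (j : ℕ)) - b (M + 1 - (j : ℕ))) / (b (M + 1 - (j : ℕ)) - x (M + 1)) with hcdef
    set C : Matrix (Fin M) (Fin M) ℂ := Matrix.of fun i j =>
      (∏ m ∈ Icc 1 (M - 1 - (j : ℕ)), (a m - x ((i : ℕ) + 1))) /
        ∏ m ∈ Icc 1 (M - (j : ℕ)), ((fun t => b (t + 1)) m - x ((i : ℕ) + 1)) with hCdef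
    have hmin : Bm = Matrix.of fun i j : Fin M => r i * (Matrix.of (fun i j : Fin M => c j * C i j)) i j := by
      ext i j
      have hjv : ((Fin.castSucc j : Fin (M+1)) : ℕ) = (j : ℕ) := rfl
      have hjM : (j : ℕ) ≠ M := by have := j.isLt; omega
      simp only [hBm, Matrix.submatrix_apply, hBdef, Matrix.of_apply, Fin.coe_castSucc,
        if_neg hjM, hrdef, hcdef, hCdef]
      have hsplit : ∏ m ∈ Icc 1 (M + 1 - (j : ℕ)), (b m - x ((i : ℕ) + 1)) =
          (b 1 - x ((i : ℕ) + 1)) * ∏ m ∈ Icc 1 (M - (j : ℕ)), (b (m + 1) - x ((i : ℕ) + 1)) := by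
        have e2 : M + 1 - (j : ℕ) = (M - (j : ℕ)) + 1 := by omega
        rw [e2, prod_Icc_bot (by omega), prod_Icc_shift]
      rw [hsplit, div_mul_div_comm, div_mul_div_comm, div_mul_div_comm]
      congr 1 <;> ring
    have hC : C.det =
        (∏ i ∈ Icc 1 M, ∏ j ∈ Icc (i + 1) M, (x i - x j) * (a i - b (j + 1))) /
          ∏ i ∈ Icc 1 M, ∏ j ∈ Icc 1 M, (b (i + 1) - x j) := by
      exact ih x a (fun t => b (t + 1)) (fun i hi j hj => by
        simp only [mem_Icc] at hi hj
        exact hbx (i + 1) (by simp; omega) j (by simp; omega))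
    have hdetBm : Bm.det = (∏ i, r i) * ((∏ j, c j) * C.det) := by
      rw [hmin, Matrix.det_mul_column r, Matrix.det_mul_row c]
    -- products of r and c
    have hr : (∏ i, r i) =
        ∏ t ∈ Icc 1 M, ((x t - x (M + 1)) / (b 1 - x t)) := by
      have h := Fin.prod_univ_eq_prod_range
        (fun t => (x (t + 1) - x (M + 1)) / (b 1 - x (t + 1))) M
      exact h.trans (prod_range_eq_Icc M fun t => (x t - x (M + 1)) / (b 1 - x t))
    have hc : (∏ j, c j) =
        ∏ t ∈ Icc 1 M, ((a t - b (t + 1)) / (b (t + 1) - x (M + 1))) := by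
      have h1 : (∏ j, c j) = ∏ m ∈ Finset.range M,
          (a (M - m) - b (M + 1 - m)) / (b (M + 1 - m) - x (M + 1)) :=
        Fin.prod_univ_eq_prod_range
          (fun m => (a (M - m) - b (M + 1 - m)) / (b (M + 1 - m) - x (M + 1))) M
      rw [h1, ← Finset.prod_range_reflect]
      have h2 : ∀ m ∈ Finset.range M,
          (a (M - (M - 1 - m)) - b (M + 1 - (M - 1 - m))) /
            (b (M + 1 - (M - 1 - m)) - x (M + 1)) =
          (a (m + 1) - b (m + 1 + 1)) / (b (m + 1 + 1) - x (M + 1)) := by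
        intro m hm; simp only [mem_range] at hm
        have e1 : M - (M - 1 - m) = m + 1 := by omega
        have e2 : M + 1 - (M - 1 - m) = m + 1 + 1 := by omega
        rw [e1, e2]
      rw [Finset.prod_congr rfl h2]
      exact prod_range_eq_Icc M fun t => (a t - b (t + 1)) / (b (t + 1) - x (M + 1))
    -- numerator and denominator identities
    have hX : ∏ i ∈ Icc 1 (M + 1), ∏ j ∈ Icc (i + 1) (M + 1), (x i - x j) =
        (∏ i ∈ Icc 1 M, ∏ j ∈ Icc (i + 1) M, (x i - x j)) *
          ∏ i ∈ Icc 1 M, (x i - x (M + 1)) := by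
      rw [Finset.prod_Icc_succ_top (by omega)]
      rw [show Icc (M + 1 + 1) (M + 1) = (∅ : Finset ℕ) from Finset.Icc_eq_empty (by omega)]
      rw [Finset.prod_empty, mul_one, ← Finset.prod_mul_distrib]
      refine Finset.prod_congr rfl fun i hi => ?_
      simp only [mem_Icc] at hi
      exact Finset.prod_Icc_succ_top (by omega) _
    have hAB : ∏ i ∈ Icc 1 (M + 1), ∏ j ∈ Icc (i + 1) (M + 1), (a i - b j) =
        (∏ i ∈ Icc 1 M, ∏ j ∈ Icc (i + 1) M, (a i - b (j + 1))) *
          ∏ t ∈ Icc 1 M, (a t - b (t + 1)) := by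
      rw [Finset.prod_Icc_succ_top (by omega)]
      rw [show Icc (M + 1 + 1) (M + 1) = (∅ : Finset ℕ) from Finset.Icc_eq_empty (by omega)]
      rw [Finset.prod_empty, mul_one, ← Finset.prod_mul_distrib]
      refine Finset.prod_congr rfl fun i hi => ?_
      simp only [mem_Icc] at hi
      have e : M + 1 = M + 1 := rfl
      rw [prod_Icc_shift i M (fun j => a i - b j), prod_Icc_bot (by omega), mul_comm]
    have hDen : ∏ i ∈ Icc 1 (M + 1), ∏ j ∈ Icc 1 (M + 1), (b i - x j) =
        ((∏ i ∈ Icc 1 M, (b 1 - x i)) * (b 1 - x (M + 1))) *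
          ((∏ i ∈ Icc 1 M, ∏ j ∈ Icc 1 M, (b (i + 1) - x j)) *
            ∏ t ∈ Icc 1 M, (b (t + 1) - x (M + 1))) := by
      rw [prod_Icc_bot (by omega : 1 ≤ M + 1) (fun i => ∏ j ∈ Icc 1 (M + 1), (b i - x j)),
        prod_Icc_shift 1 M (fun i => ∏ j ∈ Icc 1 (M + 1), (b i - x j))]
      rw [Finset.prod_Icc_succ_top (by omega : 1 ≤ M + 1) (fun j => b 1 - x j)]
      congr 1
      rw [← Finset.prod_mul_distrib]
      refine Finset.prod_congr rfl fun i hi => ?_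
      exact Finset.prod_Icc_succ_top (by omega) _
    -- nonvanishing facts
    have hQ1 : (∏ i ∈ Icc 1 M, (b 1 - x i)) ≠ 0 :=
      Finset.prod_ne_zero_iff.mpr fun i hi => by
        simp only [mem_Icc] at hi
        exact hbx' 1 (by simp) i (by simp; omega)
    have hQ2 : (∏ t ∈ Icc 1 M, (b (t + 1) - x (M + 1))) ≠ 0 :=
      Finset.prod_ne_zero_iff.mpr fun t ht => by
        simp only [mem_Icc] at ht
        exact hbx' (t + 1) (by simp; omega) (M + 1) (by simp)
    have hDenM : (∏ i ∈ Icc 1 M, ∏ j ∈ Icc 1 M, (b (i + 1) - x j)) ≠ 0 :=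
      Finset.prod_ne_zero_iff.mpr fun i hi =>
        Finset.prod_ne_zero_iff.mpr fun j hj => by
          simp only [mem_Icc] at hi hj
          exact hbx' (i + 1) (by simp; omega) j (by simp; omega)
    have hb1L : (b 1 - x (M + 1)) ≠ 0 := hbx' 1 (by simp) (M + 1) (by simp)
    -- assemble
    rw [h1, hdetB, hdetBm, hC, hr, hc]
    rw [Finset.prod_div_distrib, Finset.prod_div_distrib]
    rw [show (∏ i ∈ Icc 1 (M + 1), ∏ j ∈ Icc (i + 1) (M + 1), (x i - x j) * (a i - b j))
        = (∏ i ∈ Icc 1 (M + 1), ∏ j ∈ Icc (i + 1) (M + 1), (x i - x j)) *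
          ∏ i ∈ Icc 1 (M + 1), ∏ j ∈ Icc (i + 1) (M + 1), (a i - b j) by
        rw [← Finset.prod_mul_distrib]
        exact Finset.prod_congr rfl fun i _ => Finset.prod_mul_distrib]
    rw [show (∏ i ∈ Icc 1 M, ∏ j ∈ Icc (i + 1) M, (x i - x j) * (a i - b (j + 1)))
        = (∏ i ∈ Icc 1 M, ∏ j ∈ Icc (i + 1) M, (x i - x j)) *
          ∏ i ∈ Icc 1 M, ∏ j ∈ Icc (i + 1) M, (a i - b (j + 1)) by
        rw [← Finset.prod_mul_distrib]
        exact Finset.prod_congr rfl fun i _ => Finset.prod_mul_distrib]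
    rw [hX, hAB, hDen]
    field_simp

/-- The fully inhomogeneous deformation of the Cauchy determinant:
`det[ (1/(y_{M-j+1} - x_i)) ∏_{m=1}^{M-j} (y_m - s_m² x_i)/(s_m²(y_m - x_i)) ]_{i,j=1}^M
  = ∏_{1≤i<j≤M} (x_i - x_j)(s_i⁻² y_i - y_j) / ∏_{i,j=1}^M (y_i - x_j)`.
All sequences are indexed starting from `1`; rows and columns of the matrix are
indexed by `Fin M` (so the `1`-based indices are `i+1`, `j+1`). -/
theorem deformed_cauchy_determinant (M : ℕ) (hM : 1 ≤ M) (x y s : ℕ → ℂ)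
    (hyx : ∀ i ∈ Icc 1 M, ∀ j ∈ Icc 1 M, y i ≠ x j)
    (hs : ∀ m ∈ Icc 1 M, s m ≠ 0) :
    Matrix.det (Matrix.of fun i j : Fin M =>
        (y (M - (j : ℕ)) - x ((i : ℕ) + 1))⁻¹ *
          ∏ m ∈ Icc 1 (M - 1 - (j : ℕ)),
            (y m - s m ^ 2 * x ((i : ℕ) + 1)) / (s m ^ 2 * (y m - x ((i : ℕ) + 1)))) =
      (∏ i ∈ Icc 1 M, ∏ j ∈ Icc (i + 1) M,
          (x i - x j) * ((s i ^ 2)⁻¹ * y i - y j)) /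
        ∏ i ∈ Icc 1 M, ∏ j ∈ Icc 1 M, (y i - x j) := by
  have hkey := key M x (fun m => (s m ^ 2)⁻¹ * y m) y hyx
  rw [← hkey]
  congr 1
  ext i j
  simp only [Matrix.of_apply]
  have hj : (j : ℕ) < M := j.isLt
  have e : M - (j : ℕ) = (M - 1 - (j : ℕ)) + 1 := by omega
  have hprod : ∀ m ∈ Icc 1 (M - 1 - (j : ℕ)),
      (y m - s m ^ 2 * x ((i : ℕ) + 1)) / (s m ^ 2 * (y m - x ((i : ℕ) + 1)))
      = ((s m ^ 2)⁻¹ * y m - x ((i : ℕ) + 1)) / (y m - x ((i : ℕ) + 1)) := by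
    intro m hm
    simp only [mem_Icc] at hm
    have hsm : s m ≠ 0 := hs m (by simp; omega)
    have h2 : (s m ^ 2) ≠ 0 := pow_ne_zero _ hsm
    rw [show (s m ^ 2)⁻¹ * y m - x ((i : ℕ) + 1)
        = (y m - s m ^ 2 * x ((i : ℕ) + 1)) / (s m ^ 2) by field_simp, div_div]
  rw [Finset.prod_congr rfl hprod, Finset.prod_div_distrib]
  rw [e, Finset.prod_Icc_succ_top (by omega), ← e,
    mul_comm ((y (M - (j : ℕ)) - x ((i : ℕ) + 1))⁻¹), ← div_eq_mul_inv, div_div]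
end

section
/- Define φ_k(z) = (1/(y_{k+1} - z)) ∏_{j=1}^k (z - s_j^{-2} y_j)/(z - y_j) and ψ_l(z) = (y_{l+1}(s_{l+1}^2 - 1)/(y_{l+1} - s_{l+1}^2 z)) ∏_{j=1}^l (s_j^2 (y_j - z))/(y_j - s_j^2 z). Then for all integers k, l ≥ 0, the contour integral (1/(2πi)) ∮_γ φ_k(z) ψ_l(z) dz equals 1 if k = l and 0 otherwise, where γ is a positively oriented simple closed contour enclosing all points y_j and excluding all points s_j^{-2} y_j. -/
open Finset Real

noncomputable section

lemma prod_split' (g : ℕ → ℂ) {k l : ℕ} (h : k < l) :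
    ∏ j ∈ Icc 1 l, g j = ((∏ j ∈ Icc 1 k, g j) * g (k+1)) * ∏ j ∈ Icc (k+2) l, g j := by
  rw [show Icc 1 l = Ioc 0 l from Finset.Icc_add_one_left_eq_Ioc ..,
    show Icc 1 k = Ioc 0 k from Finset.Icc_add_one_left_eq_Ioc ..,
    show Icc (k+2) l = Ioc (k+1) l from Finset.Icc_add_one_left_eq_Ioc ..,
    ← Finset.prod_Ioc_consecutive g (Nat.zero_le k) h.le,
    ← Finset.prod_Ioc_consecutive g (Nat.le_succ k) h,
    Nat.Ioc_succ_singleton, Finset.prod_singleton, mul_assoc]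

lemma diffAt_prod' {ι : Type*} (u : Finset ι) (f : ι → ℂ → ℂ) {x : ℂ}
    (h : ∀ i ∈ u, DifferentiableAt ℂ (f i) x) :
    DifferentiableAt ℂ (fun z => ∏ i ∈ u, f i z) x := by
  classical
  induction u using Finset.induction_on with
  | empty => simpa using differentiableAt_const (1:ℂ)
  | insert _ _ hni ih =>
      rename_i a u2
      simp only [Finset.prod_insert hni]
      exact (h _ (Finset.mem_insert_self _ _)).mul
        (ih fun i hi => h i (Finset.mem_insert_of_mem hi))

lemma id_eq_case (Y z P Q h0 d0 : ℂ) (hYz : Y - z ≠ 0) (hd0 : d0 ≠ 0) (hPQ : P * Q = 1) :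
    ((Y - z)⁻¹ * P) * (h0 / d0 * Q) = (z - Y)⁻¹ * (-(h0 / d0)) := by
  have hzY : z - Y ≠ 0 := fun h => hYz (by linear_combination -h)
  have e : ((Y - z)⁻¹ * P) * (h0 / d0 * Q) = (P * Q) * ((Y - z)⁻¹ * (h0 / d0)) := by ring
  rw [e, hPQ, one_mul]
  field_simp
  ring

lemma id_lt_case (Y z P Q T s2 H : ℂ) (hYz : Y - z ≠ 0) (hd : Y - s2 * z ≠ 0) (hPQ : P * Q = 1) :
    ((Y - z)⁻¹ * P) * (H * (Q * (s2 * (Y - z) / (Y - s2 * z)) * T)) =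
      H * (s2 * (Y - s2 * z)⁻¹) * T := by
  have e : ((Y - z)⁻¹ * P) * (H * (Q * (s2 * (Y - z) / (Y - s2 * z)) * T)) =
      (P * Q) * ((Y - z)⁻¹ * (H * ((s2 * (Y - z) / (Y - s2 * z)) * T))) := by ring
  rw [e, hPQ, one_mul]
  field_simp

lemma id_gt_case (Yk z P Q T yl s2 : ℂ) (hYz : Yk - z ≠ 0) (hzy : z - yl ≠ 0)
    (hd : yl - s2 * z ≠ 0) (hs2 : s2 ≠ 0) (hPQ : P * Q = 1) :
    ((Yk - z)⁻¹ * (P * ((z - s2⁻¹ * yl) / (z - yl)) * T)) * (yl * (s2 - 1) / (yl - s2 * z) * Q) =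
      (-(yl * (s2 - 1)) / s2) * ((Yk - z)⁻¹ * (z - yl)⁻¹) * T := by
  have e : ((Yk - z)⁻¹ * (P * ((z - s2⁻¹ * yl) / (z - yl)) * T)) *
        (yl * (s2 - 1) / (yl - s2 * z) * Q)
      = (P * Q) * ((Yk - z)⁻¹ *
          (((z - s2⁻¹ * yl) / (z - yl)) * T * (yl * (s2 - 1) / (yl - s2 * z)))) := by
    ring
  rw [e, hPQ, one_mul]
  have hd' : yl - z * s2 ≠ 0 := by rwa [mul_comm]
  field_simp
  ring

set_option maxHeartbeats 1000000 in
/-- Biorthogonality of the functions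
`φ_k(z) = (1/(y_{k+1} - z)) ∏_{j=1}^k (z - s_j⁻² y_j)/(z - y_j)` and
`ψ_l(z) = (y_{l+1}(s_{l+1}² - 1)/(y_{l+1} - s_{l+1}² z)) ∏_{j=1}^l s_j²(y_j - z)/(y_j - s_j² z)`:
`(1/(2πi)) ∮_γ φ_k ψ_l dz = 1_{k=l}`, where the positively oriented contour `γ` is a
circle of radius `R` around `c` enclosing all the points `y_j` and excluding all the
points `s_j⁻² y_j`.  The sequences `y, s` are indexed starting from `1`. -/
theorem biorthogonality (y s : ℕ → ℂ) (c : ℂ) (R : ℝ) (hR : 0 < R)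
    (hs : ∀ j, 1 ≤ j → s j ≠ 0)
    (h_in : ∀ j, 1 ≤ j → ‖y j - c‖ < R)
    (h_out : ∀ j, 1 ≤ j → R < ‖(s j ^ 2)⁻¹ * y j - c‖)
    (k l : ℕ) :
    (2 * (π : ℂ) * Complex.I)⁻¹ *
        (∮ z in C(c, R),
          ((y (k + 1) - z)⁻¹ *
              ∏ j ∈ Icc 1 k, (z - (s j ^ 2)⁻¹ * y j) / (z - y j)) *
            (y (l + 1) * (s (l + 1) ^ 2 - 1) / (y (l + 1) - s (l + 1) ^ 2 * z) *
              ∏ j ∈ Icc 1 l, (s j ^ 2 * (y j - z)) / (y j - s j ^ 2 * z))) =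
      if k = l then 1 else 0 := by
  classical
  have h2pi : (2 * (π : ℂ) * Complex.I) ≠ 0 := by
    simp [Real.pi_ne_zero, Complex.I_ne_zero, Complex.ofReal_ne_zero]
  have hs2 : ∀ j, 1 ≤ j → (s j ^ 2 : ℂ) ≠ 0 := fun j hj => pow_ne_zero _ (hs j hj)
  have hkey : ∀ j, 1 ≤ j → (s j ^ 2)⁻¹ * y j ≠ y j := by
    intro j hj h
    have h1 := h_in j hj
    have h2 := h_out j hj
    rw [h] at h2
    linarith
  have hy0 : ∀ j, 1 ≤ j → y j ≠ 0 := by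
    intro j hj h
    exact hkey j hj (by rw [h, mul_zero])
  have hs1 : ∀ j, 1 ≤ j → (s j ^ 2 : ℂ) - 1 ≠ 0 := by
    intro j hj h
    apply hkey j hj
    have h1 : (s j ^ 2 : ℂ) = 1 := by linear_combination h
    rw [h1]
    simp
  -- points z with R ≤ ‖z - c‖ avoid all y j
  have hzy : ∀ z : ℂ, R ≤ ‖z - c‖ → ∀ j, 1 ≤ j → z - y j ≠ 0 := by
    intro z hz j hj h
    rw [sub_eq_zero] at h
    rw [h] at hz
    linarith [h_in j hj]
  -- points z in the closed ball avoid all (s j ^ 2)⁻¹ * y j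
  have hza : ∀ z : ℂ, ‖z - c‖ ≤ R → ∀ j, 1 ≤ j → y j - s j ^ 2 * z ≠ 0 := by
    intro z hz j hj h
    have hzval : z = (s j ^ 2)⁻¹ * y j := by
      field_simp [hs j hj]
      linear_combination -h
    rw [hzval] at hz
    linarith [h_out j hj]
  -- pairwise cancellation
  have hpair : ∀ z : ℂ, z ∈ Metric.sphere c R → ∀ m : ℕ,
      (∏ j ∈ Icc 1 m, (z - (s j ^ 2)⁻¹ * y j) / (z - y j)) *
        (∏ j ∈ Icc 1 m, (s j ^ 2 * (y j - z)) / (y j - s j ^ 2 * z)) = 1 := by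
    intro z hz m
    rw [← Finset.prod_mul_distrib]
    apply Finset.prod_eq_one
    intro j hj
    have hj1 : 1 ≤ j := (Finset.mem_Icc.mp hj).1
    have hzR : ‖z - c‖ = R := mem_sphere_iff_norm.mp hz
    have h1 : z - y j ≠ 0 := hzy z hzR.ge j hj1
    have h2 : y j - s j ^ 2 * z ≠ 0 := hza z hzR.le j hj1
    rw [div_mul_div_comm, div_eq_one_iff_eq (mul_ne_zero h1 h2)]
    field_simp [hs j hj1]
    ring
  rcases lt_trichotomy k l with hkl | rfl | hlk
  · -- case k < l : integrand extends holomorphically to the closed ball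
    rw [if_neg hkl.ne]
    suffices h0 : (∮ z in C(c, R),
          ((y (k + 1) - z)⁻¹ *
              ∏ j ∈ Icc 1 k, (z - (s j ^ 2)⁻¹ * y j) / (z - y j)) *
            (y (l + 1) * (s (l + 1) ^ 2 - 1) / (y (l + 1) - s (l + 1) ^ 2 * z) *
              ∏ j ∈ Icc 1 l, (s j ^ 2 * (y j - z)) / (y j - s j ^ 2 * z))) = 0 by
      rw [h0, mul_zero]
    set F : ℂ → ℂ := fun z =>
      y (l + 1) * (s (l + 1) ^ 2 - 1) / (y (l + 1) - s (l + 1) ^ 2 * z) *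
        (s (k + 1) ^ 2 * (y (k + 1) - s (k + 1) ^ 2 * z)⁻¹) *
        ∏ j ∈ Icc (k + 2) l, (s j ^ 2 * (y j - z)) / (y j - s j ^ 2 * z) with hF
    have hFd : ∀ z ∈ Metric.closedBall c R, DifferentiableAt ℂ F z := by
      intro z hz
      have hzb : ‖z - c‖ ≤ R := by rwa [Metric.mem_closedBall, dist_eq_norm] at hz
      rw [hF]
      apply DifferentiableAt.mul
      apply DifferentiableAt.mul
      · exact (differentiableAt_const _).div (by fun_prop)
          (hza z hzb (l + 1) (Nat.le_add_left 1 l))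
      · exact (differentiableAt_const _).mul
          (DifferentiableAt.inv (by fun_prop) (hza z hzb (k + 1) (Nat.le_add_left 1 k)))
      · apply diffAt_prod'
        intro j hj
        have hj1 : 1 ≤ j := by have := (Finset.mem_Icc.mp hj).1; omega
        exact DifferentiableAt.div (by fun_prop) (by fun_prop) (hza z hzb j hj1)
    have hcong :
        (∮ z in C(c, R),
          ((y (k + 1) - z)⁻¹ *
              ∏ j ∈ Icc 1 k, (z - (s j ^ 2)⁻¹ * y j) / (z - y j)) *
            (y (l + 1) * (s (l + 1) ^ 2 - 1) / (y (l + 1) - s (l + 1) ^ 2 * z) *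
              ∏ j ∈ Icc 1 l, (s j ^ 2 * (y j - z)) / (y j - s j ^ 2 * z))) =
        ∮ z in C(c, R), F z := by
      refine circleIntegral.integral_congr hR.le fun z hz => ?_
      have hzR : ‖z - c‖ = R := mem_sphere_iff_norm.mp hz
      have hYz : y (k + 1) - z ≠ 0 := by
        intro h
        exact hzy z hzR.ge (k + 1) (Nat.le_add_left 1 k) (by linear_combination -h)
      have hd : y (k + 1) - s (k + 1) ^ 2 * z ≠ 0 := hza z hzR.le (k + 1) (Nat.le_add_left 1 k)
      have hPQ := hpair z hz k
      rw [prod_split' (fun j => (s j ^ 2 * (y j - z)) / (y j - s j ^ 2 * z)) hkl]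
      simp only [hF]
      exact id_lt_case (y (k + 1)) z
        (∏ j ∈ Icc 1 k, (z - (s j ^ 2)⁻¹ * y j) / (z - y j))
        (∏ j ∈ Icc 1 k, (s j ^ 2 * (y j - z)) / (y j - s j ^ 2 * z))
        (∏ j ∈ Icc (k + 2) l, (s j ^ 2 * (y j - z)) / (y j - s j ^ 2 * z))
        (s (k + 1) ^ 2)
        (y (l + 1) * (s (l + 1) ^ 2 - 1) / (y (l + 1) - s (l + 1) ^ 2 * z))
        hYz hd hPQ
    rw [hcong]
    exact Complex.circleIntegral_eq_zero_of_differentiable_on_off_countable hR.le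
      Set.countable_empty
      (fun z hz => (hFd z hz).continuousAt.continuousWithinAt)
      (fun z hz => hFd z (Metric.ball_subset_closedBall hz.1))
  · -- case k = l
    rw [if_pos rfl]
    set g : ℂ → ℂ := fun z =>
      -(y (k + 1) * (s (k + 1) ^ 2 - 1) / (y (k + 1) - s (k + 1) ^ 2 * z)) with hg
    have hk1 : (1 : ℕ) ≤ k + 1 := Nat.le_add_left 1 k
    have hgd : DifferentiableOn ℂ g (Metric.closedBall c R) := by
      intro z hz
      have hzb : ‖z - c‖ ≤ R := by rwa [Metric.mem_closedBall, dist_eq_norm] at hz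
      apply DifferentiableAt.differentiableWithinAt
      rw [hg]
      apply DifferentiableAt.neg
      exact DifferentiableAt.div (by fun_prop) (by fun_prop) (hza z hzb (k + 1) hk1)
    have hw : y (k + 1) ∈ Metric.ball c R := by
      rw [Metric.mem_ball, dist_eq_norm]; exact h_in _ hk1
    have hC := hgd.circleIntegral_sub_inv_smul hw
    have hgval : g (y (k + 1)) = 1 := by
      have h1 := hy0 (k + 1) hk1
      have h2 := hs1 (k + 1) hk1
      have hne : y (k + 1) - s (k + 1) ^ 2 * y (k + 1) ≠ 0 := by
        intro h
        exact mul_ne_zero h1 h2 (by linear_combination -h)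
      rw [hg]
      have h3 : 1 - s (k + 1) ^ 2 ≠ 0 := by contrapose! h2; linear_combination -h2
      field_simp
      ring
    have hcong :
        (∮ z in C(c, R),
          ((y (k + 1) - z)⁻¹ *
              ∏ j ∈ Icc 1 k, (z - (s j ^ 2)⁻¹ * y j) / (z - y j)) *
            (y (k + 1) * (s (k + 1) ^ 2 - 1) / (y (k + 1) - s (k + 1) ^ 2 * z) *
              ∏ j ∈ Icc 1 k, (s j ^ 2 * (y j - z)) / (y j - s j ^ 2 * z))) =
        ∮ z in C(c, R), (z - y (k + 1))⁻¹ • g z := by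
      refine circleIntegral.integral_congr hR.le fun z hz => ?_
      have hzR : ‖z - c‖ = R := mem_sphere_iff_norm.mp hz
      have hzY : z - y (k + 1) ≠ 0 := hzy z hzR.ge (k + 1) hk1
      have hd : y (k + 1) - s (k + 1) ^ 2 * z ≠ 0 := hza z hzR.le (k + 1) hk1
      have hPQ := hpair z hz k
      simp only [smul_eq_mul, hg]
      have hYz : y (k + 1) - z ≠ 0 := fun h => hzY (by linear_combination -h)
      exact id_eq_case (y (k + 1)) z
        (∏ j ∈ Icc 1 k, (z - (s j ^ 2)⁻¹ * y j) / (z - y j))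
        (∏ j ∈ Icc 1 k, (s j ^ 2 * (y j - z)) / (y j - s j ^ 2 * z))
        (y (k + 1) * (s (k + 1) ^ 2 - 1)) (y (k + 1) - s (k + 1) ^ 2 * z)
        hYz hd hPQ
    rw [hcong, hC, hgval, smul_eq_mul, mul_one, inv_mul_cancel₀ h2pi]
  · -- case l < k
    rw [if_neg (by omega : ¬ k = l)]
    suffices h0 : (∮ z in C(c, R),
          ((y (k + 1) - z)⁻¹ *
              ∏ j ∈ Icc 1 k, (z - (s j ^ 2)⁻¹ * y j) / (z - y j)) *
            (y (l + 1) * (s (l + 1) ^ 2 - 1) / (y (l + 1) - s (l + 1) ^ 2 * z) *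
              ∏ j ∈ Icc 1 l, (s j ^ 2 * (y j - z)) / (y j - s j ^ 2 * z))) = 0 by
      rw [h0, mul_zero]
    have hl1 : (1 : ℕ) ≤ l + 1 := Nat.le_add_left 1 l
    have hk1 : (1 : ℕ) ≤ k + 1 := Nat.le_add_left 1 k
    set A : ℂ := -(y (l + 1) * (s (l + 1) ^ 2 - 1)) / s (l + 1) ^ 2 with hA
    set G : ℂ → ℂ := fun z =>
      A * ((y (k + 1) - z)⁻¹ * (z - y (l + 1))⁻¹) *
        ∏ j ∈ Icc (l + 2) k, (z - (s j ^ 2)⁻¹ * y j) / (z - y j) with hG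
    -- step 1: congruence on the sphere
    have hcong :
        (∮ z in C(c, R),
          ((y (k + 1) - z)⁻¹ *
              ∏ j ∈ Icc 1 k, (z - (s j ^ 2)⁻¹ * y j) / (z - y j)) *
            (y (l + 1) * (s (l + 1) ^ 2 - 1) / (y (l + 1) - s (l + 1) ^ 2 * z) *
              ∏ j ∈ Icc 1 l, (s j ^ 2 * (y j - z)) / (y j - s j ^ 2 * z))) =
        ∮ z in C(c, R), G z := by
      refine circleIntegral.integral_congr hR.le fun z hz => ?_
      have hzR : ‖z - c‖ = R := mem_sphere_iff_norm.mp hz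
      have hYz : y (k + 1) - z ≠ 0 := by
        intro h
        exact hzy z hzR.ge (k + 1) hk1 (by linear_combination -h)
      have hzyl : z - y (l + 1) ≠ 0 := hzy z hzR.ge (l + 1) hl1
      have hd : y (l + 1) - s (l + 1) ^ 2 * z ≠ 0 := hza z hzR.le (l + 1) hl1
      have hPQ := hpair z hz l
      rw [prod_split' (fun j => (z - (s j ^ 2)⁻¹ * y j) / (z - y j)) hlk]
      simp only [hG, hA]
      exact id_gt_case (y (k + 1)) z
        (∏ j ∈ Icc 1 l, (z - (s j ^ 2)⁻¹ * y j) / (z - y j))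
        (∏ j ∈ Icc 1 l, (s j ^ 2 * (y j - z)) / (y j - s j ^ 2 * z))
        (∏ j ∈ Icc (l + 2) k, (z - (s j ^ 2)⁻¹ * y j) / (z - y j))
        (y (l + 1)) (s (l + 1) ^ 2)
        hYz hzyl hd (hs2 (l + 1) hl1) hPQ
    rw [hcong]
    -- step 2: all big circles give the same integral
    set V : ℂ := ∮ z in C(c, R), G z with hV
    clear_value A G V
    have hGd : ∀ z : ℂ, R ≤ ‖z - c‖ → DifferentiableAt ℂ G z := by
      intro z hz
      have h1 : y (k + 1) - z ≠ 0 := by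
        intro h
        exact hzy z hz (k + 1) hk1 (by linear_combination -h)
      have h2 : z - y (l + 1) ≠ 0 := hzy z hz (l + 1) hl1
      rw [hG]
      apply DifferentiableAt.mul
      · exact (differentiableAt_const _).mul
          ((DifferentiableAt.inv (by fun_prop) h1).mul (DifferentiableAt.inv (by fun_prop) h2))
      · apply diffAt_prod'
        intro j hj
        have hj1 : 1 ≤ j := by have := (Finset.mem_Icc.mp hj).1; omega
        exact DifferentiableAt.div (by fun_prop) (by fun_prop) (hzy z hz j hj1)
    have hsame : ∀ r : ℝ, R ≤ r → (∮ z in C(c, r), G z) = V := by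
      intro r hr
      rw [hV]
      apply Complex.circleIntegral_eq_of_differentiable_on_annulus_off_countable hR hr
        Set.countable_empty
      · intro z hz
        have hzb : R ≤ ‖z - c‖ := by
          have := hz.2
          rw [Metric.mem_ball, dist_eq_norm, not_lt] at this
          exact this
        exact (hGd z hzb).continuousAt.continuousWithinAt
      · intro z hz
        have hzb : R ≤ ‖z - c‖ := by
          have := hz.1.2
          rw [Metric.mem_closedBall, dist_eq_norm, not_le] at this
          exact this.le
        exact hGd z hzb
    -- step 3: bound on big circles
    set n : ℕ := (Icc (l + 2) k).card with hn
    set B : ℝ := R + ∑ j ∈ Icc (l + 2) k, ‖(s j ^ 2)⁻¹ * y j - c‖ with hB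
    have hsum_nonneg : (0:ℝ) ≤ ∑ j ∈ Icc (l + 2) k, ‖(s j ^ 2)⁻¹ * y j - c‖ :=
      Finset.sum_nonneg fun j _ => norm_nonneg _
    have hBR : R ≤ B := by rw [hB]; linarith
    have hBpos : 0 < B := lt_of_lt_of_le hR hBR
    have hBa : ∀ j ∈ Icc (l + 2) k, ‖(s j ^ 2)⁻¹ * y j - c‖ ≤ B := by
      intro j hj
      have := Finset.single_le_sum (f := fun j => ‖(s j ^ 2)⁻¹ * y j - c‖)
        (fun i _ => norm_nonneg _) hj
      rw [hB]; linarith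
    set D : ℝ := ‖A‖ * 4 * 4 ^ n with hD
    have hDnn : 0 ≤ D := by rw [hD]; positivity
    clear_value n B D
    have hbound : ∀ r : ℝ, 2 * B ≤ r → ‖V‖ ≤ 2 * π * D / r := by
      intro r hr
      have hrpos : 0 < r := lt_of_lt_of_le (by linarith) hr
      have hrR : R ≤ r := by linarith
      have hlow : ∀ z : ℂ, ‖z - c‖ = r → ∀ j, 1 ≤ j → r / 2 ≤ ‖z - y j‖ := by
        intro z hzr j hj
        have t1 : ‖z - c‖ - ‖y j - c‖ ≤ ‖(z - c) - (y j - c)‖ := norm_sub_norm_le _ _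
        rw [show (z - c) - (y j - c) = z - y j from by ring] at t1
        have := h_in j hj
        rw [hzr] at t1
        linarith
      have hptbound : ∀ z ∈ Metric.sphere c r, ‖G z‖ ≤ D / r ^ 2 := by
        intro z hz
        have hzr : ‖z - c‖ = r := mem_sphere_iff_norm.mp hz
        have hbk : r / 2 ≤ ‖y (k + 1) - z‖ := by
          rw [norm_sub_rev]; exact hlow z hzr (k + 1) hk1
        have hbl : r / 2 ≤ ‖z - y (l + 1)‖ := hlow z hzr (l + 1) hl1
        have hinv1 : ‖y (k + 1) - z‖⁻¹ ≤ 2 / r := by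
          rw [show (2:ℝ) / r = (r / 2)⁻¹ by field_simp]
          exact inv_anti₀ (by linarith) hbk
        have hinv2 : ‖z - y (l + 1)‖⁻¹ ≤ 2 / r := by
          rw [show (2:ℝ) / r = (r / 2)⁻¹ by field_simp]
          exact inv_anti₀ (by linarith) hbl
        have hprod : ∏ j ∈ Icc (l + 2) k, ‖(z - (s j ^ 2)⁻¹ * y j) / (z - y j)‖ ≤ 4 ^ n := by
          rw [hn, ← Finset.prod_const]
          apply Finset.prod_le_prod (fun j _ => norm_nonneg _)
          intro j hj
          have hj1 : 1 ≤ j := by have := (Finset.mem_Icc.mp hj).1; omega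
          have hup : ‖z - (s j ^ 2)⁻¹ * y j‖ ≤ r + B := by
            have t1 : ‖z - (s j ^ 2)⁻¹ * y j‖ ≤ ‖z - c‖ + ‖(s j ^ 2)⁻¹ * y j - c‖ := by
              have := norm_sub_le (z - c) ((s j ^ 2)⁻¹ * y j - c)
              rw [show (z - c) - ((s j ^ 2)⁻¹ * y j - c) = z - (s j ^ 2)⁻¹ * y j from by ring]
                at this
              exact this
            have := hBa j hj
            rw [hzr] at t1
            linarith
          have hlo : r / 2 ≤ ‖z - y j‖ := hlow z hzr j hj1
          rw [norm_div, div_le_iff₀ (by linarith [hrpos] : (0:ℝ) < ‖z - y j‖)]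
          calc ‖z - (s j ^ 2)⁻¹ * y j‖ ≤ r + B := hup
            _ ≤ 4 * (r / 2) := by linarith only [hr, hBpos, hrpos]
            _ ≤ 4 * ‖z - y j‖ := by linarith only [hlo]
        have hGnorm : ‖G z‖ = ‖A‖ * (‖y (k + 1) - z‖⁻¹ * ‖z - y (l + 1)‖⁻¹) *
            ∏ j ∈ Icc (l + 2) k, ‖(z - (s j ^ 2)⁻¹ * y j) / (z - y j)‖ := by
          simp only [hG, norm_mul, norm_inv, norm_prod]
        rw [hGnorm]
        have h2r : (0:ℝ) ≤ 2 / r := div_nonneg (by norm_num) hrpos.le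
        have h12 : ‖y (k + 1) - z‖⁻¹ * ‖z - y (l + 1)‖⁻¹ ≤ 2 / r * (2 / r) :=
          mul_le_mul hinv1 hinv2 (inv_nonneg.mpr (norm_nonneg _)) h2r
        have hA1 : ‖A‖ * (‖y (k + 1) - z‖⁻¹ * ‖z - y (l + 1)‖⁻¹) ≤ ‖A‖ * (2 / r * (2 / r)) :=
          mul_le_mul_of_nonneg_left h12 (norm_nonneg A)
        calc ‖A‖ * (‖y (k + 1) - z‖⁻¹ * ‖z - y (l + 1)‖⁻¹) *
              ∏ j ∈ Icc (l + 2) k, ‖(z - (s j ^ 2)⁻¹ * y j) / (z - y j)‖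
            ≤ ‖A‖ * (2 / r * (2 / r)) * 4 ^ n :=
              mul_le_mul hA1 hprod (Finset.prod_nonneg fun j _ => norm_nonneg _)
                (mul_nonneg (norm_nonneg A) (mul_nonneg h2r h2r))
          _ = D / r ^ 2 := by rw [hD]; field_simp; ring
      rw [← hsame r hrR]
      have := circleIntegral.norm_integral_le_of_norm_le_const (f := G) hrpos.le hptbound
      calc ‖∮ z in C(c, r), G z‖ ≤ 2 * π * r * (D / r ^ 2) := this
        _ = 2 * π * D / r := by field_simp
    -- step 4: conclude V = 0
    have hVnorm : ‖V‖ ≤ 0 := by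
      apply le_of_forall_pos_le_add
      intro ε hε
      set r : ℝ := max (2 * B) (2 * π * D / ε + 1) with hr
      have hr1 : 2 * B ≤ r := le_max_left _ _
      have hr2 : 2 * π * D / ε + 1 ≤ r := le_max_right _ _
      have hrpos : 0 < r := lt_of_lt_of_le (by linarith) hr1
      have h1 : ‖V‖ ≤ 2 * π * D / r := hbound r hr1
      have h2 : 2 * π * D / r ≤ ε := by
        rw [div_le_iff₀ hrpos]
        have t1 := mul_le_mul_of_nonneg_left hr2 hε.le
        rw [mul_add, mul_div_cancel₀ _ hε.ne', mul_one] at t1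
        have ht : 0 ≤ 2 * π * D := by positivity
        nlinarith
      linarith
    rw [norm_le_zero_iff.mp hVnorm]

end
end

section
/- For complex u, v and sequences y_j, s_j satisfying |((u - s_j^{-2} y_j)/(u - y_j)) · ((v - y_j)/(v - s_j^{-2} y_j))| < 1 - δ < 1 for all sufficiently large j (with δ > 0 fixed), the infinite series ∑_{k=0}^∞ φ_k(u) ψ_k(v) converges and equals 1/(u - v), where φ_k(u) = (1/(y_{k+1} - u)) ∏_{j=1}^k (u - s_j^{-2} y_j)/(u - y_j) and ψ_k(v) = (y_{k+1}(s_{k+1}^2 - 1)/(y_{k+1} - s_{k+1}^2 v)) ∏_{j=1}^k (s_j^2 (y_j - v))/(y_j - s_j^2 v). -/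
open Finset Filter

noncomputable section

/-- The telescoping series identity `∑_{k=0}^∞ φ_k(u) ψ_k(v) = 1/(u - v)`, where
`φ_k(u) = (1/(y_{k+1} - u)) ∏_{j=1}^k (u - s_j⁻² y_j)/(u - y_j)` and
`ψ_k(v) = (y_{k+1}(s_{k+1}² - 1)/(y_{k+1} - s_{k+1}² v)) ∏_{j=1}^k s_j²(y_j - v)/(y_j - s_j² v)`,
under the geometric decay hypothesis
`|((u - s_j⁻² y_j)/(u - y_j)) ((v - y_j)/(v - s_j⁻² y_j))| < 1 - δ < 1`
for all sufficiently large `j`.  The sequences `y, s` are indexed starting from `1`;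
convergence is convergence of the partial sums. -/
theorem telescoping_series (y s : ℕ → ℂ) (u v : ℂ) (δ : ℝ) (hδ : 0 < δ)
    (hs : ∀ j, 1 ≤ j → s j ≠ 0)
    (huy : ∀ j, 1 ≤ j → u ≠ y j)
    (hvy : ∀ j, 1 ≤ j → v ≠ (s j ^ 2)⁻¹ * y j)
    (huv : u ≠ v)
    (hbound : ∃ J : ℕ, ∀ j, J ≤ j → 1 ≤ j →
      ‖(u - (s j ^ 2)⁻¹ * y j) / (u - y j) * ((v - y j) / (v - (s j ^ 2)⁻¹ * y j))‖ < 1 - δ) :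
    Tendsto
      (fun n => ∑ k ∈ range n,
        ((y (k + 1) - u)⁻¹ * ∏ j ∈ Icc 1 k, (u - (s j ^ 2)⁻¹ * y j) / (u - y j)) *
          (y (k + 1) * (s (k + 1) ^ 2 - 1) / (y (k + 1) - s (k + 1) ^ 2 * v) *
            ∏ j ∈ Icc 1 k, (s j ^ 2 * (y j - v)) / (y j - s j ^ 2 * v)))
      atTop (nhds (1 / (u - v))) := by
  obtain ⟨J, hbound⟩ := hbound
  set r : ℕ → ℂ := fun j =>
    (u - (s j ^ 2)⁻¹ * y j) / (u - y j) * ((v - y j) / (v - (s j ^ 2)⁻¹ * y j)) with hr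
  set P : ℕ → ℂ := fun k => ∏ j ∈ Icc 1 k, r j with hPdef
  have hu : ∀ j, 1 ≤ j → u - y j ≠ 0 := fun j hj => sub_ne_zero.mpr (huy j hj)
  have hv : ∀ j, 1 ≤ j → v - (s j ^ 2)⁻¹ * y j ≠ 0 := fun j hj => sub_ne_zero.mpr (hvy j hj)
  have hs2 : ∀ j, 1 ≤ j → (s j : ℂ) ^ 2 ≠ 0 := fun j hj => pow_ne_zero _ (hs j hj)
  have hyv : ∀ j, 1 ≤ j → y j - s j ^ 2 * v ≠ 0 := by
    intro j hj
    have h := hv j hj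
    have h2 := hs2 j hj
    intro hcon
    apply h
    linear_combination (-(s j ^ 2)⁻¹) * hcon - v * (mul_inv_cancel₀ h2)
  have huv' : u - v ≠ 0 := sub_ne_zero.mpr huv
  -- the partial sums telescope
  have key : ∀ k : ℕ,
      ((y (k + 1) - u)⁻¹ * ∏ j ∈ Icc 1 k, (u - (s j ^ 2)⁻¹ * y j) / (u - y j)) *
          (y (k + 1) * (s (k + 1) ^ 2 - 1) / (y (k + 1) - s (k + 1) ^ 2 * v) *
            ∏ j ∈ Icc 1 k, (s j ^ 2 * (y j - v)) / (y j - s j ^ 2 * v)) =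
        (u - v)⁻¹ * (P k - P (k + 1)) := by
    intro k
    have hprod2 : (∏ j ∈ Icc 1 k, (s j ^ 2 * (y j - v)) / (y j - s j ^ 2 * v)) =
        ∏ j ∈ Icc 1 k, (v - y j) / (v - (s j ^ 2)⁻¹ * y j) := by
      refine Finset.prod_congr rfl fun j hj => ?_
      have hj1 : 1 ≤ j := (Finset.mem_Icc.mp hj).1
      have h1 := hs2 j hj1
      have h2 := hyv j hj1
      have h3 := hv j hj1
      rw [div_eq_div_iff h2 h3]
      have hww : s j ^ 2 * (s j ^ 2)⁻¹ = 1 := mul_inv_cancel₀ h1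
      linear_combination (-(y j - v) * y j) * hww
    have hPk1 : P (k + 1) = P k * r (k + 1) := by
      simp only [hPdef]
      exact Finset.prod_Icc_succ_top (Nat.le_add_left 1 k) r
    rw [hprod2, hPk1]
    have hPk : P k = (∏ j ∈ Icc 1 k, (u - (s j ^ 2)⁻¹ * y j) / (u - y j)) *
        ∏ j ∈ Icc 1 k, (v - y j) / (v - (s j ^ 2)⁻¹ * y j) := by
      simp only [hPdef, hr, ← Finset.prod_mul_distrib]
    have hfac : (y (k + 1) - u)⁻¹ *
        (y (k + 1) * (s (k + 1) ^ 2 - 1) / (y (k + 1) - s (k + 1) ^ 2 * v)) =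
        (u - v)⁻¹ * (1 - r (k + 1)) := by
      have h1 := hu (k + 1) (Nat.le_add_left 1 k)
      have h2 := hv (k + 1) (Nat.le_add_left 1 k)
      have h3 := hs2 (k + 1) (Nat.le_add_left 1 k)
      have h4 := hyv (k + 1) (Nat.le_add_left 1 k)
      have h5 : y (k + 1) - u ≠ 0 := fun hc => h1 (by linear_combination -hc)
      have h6 : s (k + 1) ^ 2 * v - y (k + 1) ≠ 0 := fun hc => h4 (by linear_combination -hc)
      have hrr : r (k + 1) =
          ((s (k + 1) ^ 2 * u - y (k + 1)) * (v - y (k + 1))) /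
            ((u - y (k + 1)) * (s (k + 1) ^ 2 * v - y (k + 1))) := by
        simp only [hr]
        rw [div_mul_div_comm, div_eq_div_iff (mul_ne_zero h1 h2) (mul_ne_zero h1 h6)]
        have hww : (s (k + 1) ^ 2)⁻¹ * s (k + 1) ^ 2 = 1 := inv_mul_cancel₀ h3
        linear_combination (v - y (k + 1)) * (u - y (k + 1)) * y (k + 1) * (u - v) * hww
      rw [hrr]
      field_simp
      ring
    calc ((y (k + 1) - u)⁻¹ * ∏ j ∈ Icc 1 k, (u - (s j ^ 2)⁻¹ * y j) / (u - y j)) *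
          (y (k + 1) * (s (k + 1) ^ 2 - 1) / (y (k + 1) - s (k + 1) ^ 2 * v) *
            ∏ j ∈ Icc 1 k, (v - y j) / (v - (s j ^ 2)⁻¹ * y j)) =
        ((y (k + 1) - u)⁻¹ *
          (y (k + 1) * (s (k + 1) ^ 2 - 1) / (y (k + 1) - s (k + 1) ^ 2 * v))) * P k := by
          rw [hPk]; ring
      _ = (u - v)⁻¹ * (P k - P k * r (k + 1)) := by rw [hfac]; ring
  have hsum : ∀ n : ℕ,
      (∑ k ∈ range n,
        ((y (k + 1) - u)⁻¹ * ∏ j ∈ Icc 1 k, (u - (s j ^ 2)⁻¹ * y j) / (u - y j)) *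
          (y (k + 1) * (s (k + 1) ^ 2 - 1) / (y (k + 1) - s (k + 1) ^ 2 * v) *
            ∏ j ∈ Icc 1 k, (s j ^ 2 * (y j - v)) / (y j - s j ^ 2 * v))) =
        (u - v)⁻¹ * (1 - P n) := by
    intro n
    have hP0 : P 0 = 1 := by simp [hPdef]
    calc (∑ k ∈ range n, _) = ∑ k ∈ range n, (u - v)⁻¹ * (P k - P (k + 1)) :=
          Finset.sum_congr rfl fun k _ => key k
      _ = (u - v)⁻¹ * ∑ k ∈ range n, (P k - P (k + 1)) := by rw [Finset.mul_sum]
      _ = (u - v)⁻¹ * (P 0 - P n) := by rw [Finset.sum_range_sub' P n]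
      _ = (u - v)⁻¹ * (1 - P n) := by rw [hP0]
  -- P tends to zero
  set c : ℝ := 1 - δ with hc
  set J' : ℕ := max J 1 with hJ'
  have hc1 : c < 1 := by simp [hc]; linarith
  have hc0 : 0 < c := lt_of_le_of_lt (norm_nonneg (r J'))
    (hbound J' (le_max_left _ _) (le_max_right _ _))
  have hPn : ∀ n, J' ≤ n → ‖P n‖ ≤ ‖P J'‖ / c ^ J' * c ^ n := by
    intro n hn
    have hsplit : P n = P J' * ∏ j ∈ Ioc J' n, r j := by
      simp only [hPdef, ← Finset.Icc_add_one_left_eq_Ioc 0]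
      exact (Finset.prod_Ioc_consecutive r (Nat.zero_le J') hn).symm
    have hle : ‖∏ j ∈ Ioc J' n, r j‖ ≤ c ^ (n - J') := by
      rw [norm_prod]
      calc (∏ j ∈ Ioc J' n, ‖r j‖) ≤ ∏ j ∈ Ioc J' n, c := by
            refine Finset.prod_le_prod (fun j _ => norm_nonneg _) fun j hj => ?_
            have hj' := (Finset.mem_Ioc.mp hj).1
            exact (hbound j (le_trans (le_max_left _ _) hj'.le)
              (le_trans (le_max_right _ _) hj'.le)).le
        _ = c ^ (n - J') := by rw [Finset.prod_const, Nat.card_Ioc]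
    calc ‖P n‖ = ‖P J'‖ * ‖∏ j ∈ Ioc J' n, r j‖ := by rw [hsplit, norm_mul]
      _ ≤ ‖P J'‖ * c ^ (n - J') := by
          exact mul_le_mul_of_nonneg_left hle (norm_nonneg _)
      _ = ‖P J'‖ / c ^ J' * c ^ n := by
          rw [pow_sub₀ c hc0.ne' hn]; ring
  have hPtendsto : Tendsto P atTop (nhds 0) := by
    rw [tendsto_zero_iff_norm_tendsto_zero]
    refine squeeze_zero' (Eventually.of_forall fun n => norm_nonneg _)
      (eventually_atTop.mpr ⟨J', hPn⟩) ?_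
    have := (tendsto_pow_atTop_nhds_zero_of_lt_one hc0.le hc1).const_mul (‖P J'‖ / c ^ J')
    simpa using this
  have hfinal : Tendsto (fun n => (u - v)⁻¹ * (1 - P n)) atTop (nhds (1 / (u - v))) := by
    have h1 : Tendsto (fun n => (1 : ℂ) - P n) atTop (nhds (1 - 0)) :=
      tendsto_const_nhds.sub hPtendsto
    have h2 := h1.const_mul ((u - v)⁻¹)
    simpa [one_div] using h2
  exact hfinal.congr fun n => (hsum n).symm

end
end

section
/- The cross vertex weights R(0,0;0,0) = 1, R(1,1;1,1) = (x_2 - x_1 r_1^{-2})/(x_1 - x_2 r_2^{-2}), R(1,0;1,0) = (x_1 r_1^{-2} - x_2 r_2^{-2})/(x_1 - x_2 r_2^{-2}), R(0,1;0,1) = (x_1 - x_2)/(x_1 - x_2 r_2^{-2}), R(1,0;0,1) = x_1(1 - r_1^{-2})/(x_1 - x_2 r_2^{-2}), R(0,1;1,0) = x_2(1 - r_2^{-2})/(x_1 - x_2 r_2^{-2}) (with R(i_1,j_1;i_2,j_2) = 0 unless i_1 + j_1 = i_2 + j_2), together with the free fermion weights W(·|x_i; y; r_i; s), satisfy the Yang–Baxter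 equation: for all i_1,i_2,i_3,j_1,j_2,j_3 ∈ {0,1}, ∑_{k_1,k_2,k_3 ∈ {0,1}} R(i_2,i_1;k_2,k_1) W(i_3,k_1;k_3,j_1 | x_1;y;r_1;s) W(k_3,k_2;j_3,j_2 | x_2;y;r_2;s) = ∑_{k'_1,k'_2,k'_3 ∈ {0,1}} R(k'_2,k'_1;j_2,j_1) W(i_3,i_2;k'_3,k'_2 | x_2;y;r_2;s) W(k'_3,i_1;j_3,k'_1 | x_1;y;r_1;s). -/
noncomputable section

/-- The free fermion six vertex weights `W(i₁,j₁;i₂,j₂ | x;y;r;s)`.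
Weights are zero unless `i₁ + j₁ = i₂ + j₂` (path conservation). -/
def W6 (x y r s : ℂ) : Bool → Bool → Bool → Bool → ℂ
  | false, false, false, false => 1
  | true, true, true, true => ((r ^ 2)⁻¹ * x - y) / ((s ^ 2)⁻¹ * y - x)
  | true, false, true, false => ((s ^ 2)⁻¹ * y - (r ^ 2)⁻¹ * x) / ((s ^ 2)⁻¹ * y - x)
  | false, true, false, true => (y - x) / ((s ^ 2)⁻¹ * y - x)
  | true, false, false, true => x * ((r ^ 2)⁻¹ - 1) / ((s ^ 2)⁻¹ * y - x)
  | false, true, true, false => y * ((s ^ 2)⁻¹ - 1) / ((s ^ 2)⁻¹ * y - x)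
  | _, _, _, _ => 0

/-- The cross vertex weights `R(i₁,j₁;i₂,j₂)`, zero unless `i₁ + j₁ = i₂ + j₂`. -/
def R6 (x1 x2 r1 r2 : ℂ) : Bool → Bool → Bool → Bool → ℂ
  | false, false, false, false => 1
  | true, true, true, true => (x2 - x1 * (r1 ^ 2)⁻¹) / (x1 - x2 * (r2 ^ 2)⁻¹)
  | true, false, true, false => (x1 * (r1 ^ 2)⁻¹ - x2 * (r2 ^ 2)⁻¹) / (x1 - x2 * (r2 ^ 2)⁻¹)
  | false, true, false, true => (x1 - x2) / (x1 - x2 * (r2 ^ 2)⁻¹)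
  | true, false, false, true => x1 * (1 - (r1 ^ 2)⁻¹) / (x1 - x2 * (r2 ^ 2)⁻¹)
  | false, true, true, false => x2 * (1 - (r2 ^ 2)⁻¹) / (x1 - x2 * (r2 ^ 2)⁻¹)
  | _, _, _, _ => 0

/-- `W6` with `(r²)⁻¹, (s²)⁻¹` abstracted as `a, c`. -/
def W6' (x y a c : ℂ) : Bool → Bool → Bool → Bool → ℂ
  | false, false, false, false => 1
  | false, false, false, true => 0
  | false, false, true, false => 0
  | false, false, true, true => 0
  | false, true, false, false => 0
  | false, true, false, true => (y - x) / (c * y - x)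
  | false, true, true, false => y * (c - 1) / (c * y - x)
  | false, true, true, true => 0
  | true, false, false, false => 0
  | true, false, false, true => x * (a - 1) / (c * y - x)
  | true, false, true, false => (c * y - a * x) / (c * y - x)
  | true, false, true, true => 0
  | true, true, false, false => 0
  | true, true, false, true => 0
  | true, true, true, false => 0
  | true, true, true, true => (a * x - y) / (c * y - x)

/-- `R6` with `(r₁²)⁻¹, (r₂²)⁻¹` abstracted as `a1, a2`. -/
def R6' (x1 x2 a1 a2 : ℂ) : Bool → Bool → Bool → Bool → ℂ
  | false, false, false, false => 1
  | false, false, false, true => 0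
  | false, false, true, false => 0
  | false, false, true, true => 0
  | false, true, false, false => 0
  | false, true, false, true => (x1 - x2) / (x1 - x2 * a2)
  | false, true, true, false => x2 * (1 - a2) / (x1 - x2 * a2)
  | false, true, true, true => 0
  | true, false, false, false => 0
  | true, false, false, true => x1 * (1 - a1) / (x1 - x2 * a2)
  | true, false, true, false => (x1 * a1 - x2 * a2) / (x1 - x2 * a2)
  | true, false, true, true => 0
  | true, true, false, false => 0
  | true, true, false, true => 0
  | true, true, true, false => 0
  | true, true, true, true => (x2 - x1 * a1) / (x1 - x2 * a2)

lemma W6'_f_f_f_f (x y a c : ℂ) : W6' x y a c false false false false = 1 := rfl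
lemma R6'_f_f_f_f (x1 x2 a1 a2 : ℂ) : R6' x1 x2 a1 a2 false false false false = 1 := rfl
lemma W6'_f_f_f_t (x y a c : ℂ) : W6' x y a c false false false true = 0 := rfl
lemma R6'_f_f_f_t (x1 x2 a1 a2 : ℂ) : R6' x1 x2 a1 a2 false false false true = 0 := rfl
lemma W6'_f_f_t_f (x y a c : ℂ) : W6' x y a c false false true false = 0 := rfl
lemma R6'_f_f_t_f (x1 x2 a1 a2 : ℂ) : R6' x1 x2 a1 a2 false false true false = 0 := rfl
lemma W6'_f_f_t_t (x y a c : ℂ) : W6' x y a c false false true true = 0 := rfl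
lemma R6'_f_f_t_t (x1 x2 a1 a2 : ℂ) : R6' x1 x2 a1 a2 false false true true = 0 := rfl
lemma W6'_f_t_f_f (x y a c : ℂ) : W6' x y a c false true false false = 0 := rfl
lemma R6'_f_t_f_f (x1 x2 a1 a2 : ℂ) : R6' x1 x2 a1 a2 false true false false = 0 := rfl
lemma W6'_f_t_f_t (x y a c : ℂ) : W6' x y a c false true false true = (y - x) / (c * y - x) := rfl
lemma R6'_f_t_f_t (x1 x2 a1 a2 : ℂ) : R6' x1 x2 a1 a2 false true false true = (x1 - x2) / (x1 - x2 * a2) := rfl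
lemma W6'_f_t_t_f (x y a c : ℂ) : W6' x y a c false true true false = y * (c - 1) / (c * y - x) := rfl
lemma R6'_f_t_t_f (x1 x2 a1 a2 : ℂ) : R6' x1 x2 a1 a2 false true true false = x2 * (1 - a2) / (x1 - x2 * a2) := rfl
lemma W6'_f_t_t_t (x y a c : ℂ) : W6' x y a c false true true true = 0 := rfl
lemma R6'_f_t_t_t (x1 x2 a1 a2 : ℂ) : R6' x1 x2 a1 a2 false true true true = 0 := rfl
lemma W6'_t_f_f_f (x y a c : ℂ) : W6' x y a c true false false false = 0 := rfl
lemma R6'_t_f_f_f (x1 x2 a1 a2 : ℂ) : R6' x1 x2 a1 a2 true false false false = 0 := rfl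
lemma W6'_t_f_f_t (x y a c : ℂ) : W6' x y a c true false false true = x * (a - 1) / (c * y - x) := rfl
lemma R6'_t_f_f_t (x1 x2 a1 a2 : ℂ) : R6' x1 x2 a1 a2 true false false true = x1 * (1 - a1) / (x1 - x2 * a2) := rfl
lemma W6'_t_f_t_f (x y a c : ℂ) : W6' x y a c true false true false = (c * y - a * x) / (c * y - x) := rfl
lemma R6'_t_f_t_f (x1 x2 a1 a2 : ℂ) : R6' x1 x2 a1 a2 true false true false = (x1 * a1 - x2 * a2) / (x1 - x2 * a2) := rfl
lemma W6'_t_f_t_t (x y a c : ℂ) : W6' x y a c true false true true = 0 := rfl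
lemma R6'_t_f_t_t (x1 x2 a1 a2 : ℂ) : R6' x1 x2 a1 a2 true false true true = 0 := rfl
lemma W6'_t_t_f_f (x y a c : ℂ) : W6' x y a c true true false false = 0 := rfl
lemma R6'_t_t_f_f (x1 x2 a1 a2 : ℂ) : R6' x1 x2 a1 a2 true true false false = 0 := rfl
lemma W6'_t_t_f_t (x y a c : ℂ) : W6' x y a c true true false true = 0 := rfl
lemma R6'_t_t_f_t (x1 x2 a1 a2 : ℂ) : R6' x1 x2 a1 a2 true true false true = 0 := rfl
lemma W6'_t_t_t_f (x y a c : ℂ) : W6' x y a c true true true false = 0 := rfl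
lemma R6'_t_t_t_f (x1 x2 a1 a2 : ℂ) : R6' x1 x2 a1 a2 true true true false = 0 := rfl
lemma W6'_t_t_t_t (x y a c : ℂ) : W6' x y a c true true true true = (a * x - y) / (c * y - x) := rfl
lemma R6'_t_t_t_t (x1 x2 a1 a2 : ℂ) : R6' x1 x2 a1 a2 true true true true = (x2 - x1 * a1) / (x1 - x2 * a2) := rfl

lemma W6_eq_W6' (x y r s : ℂ) : W6 x y r s = W6' x y (r ^ 2)⁻¹ (s ^ 2)⁻¹ := by
  funext i j k l; cases i <;> cases j <;> cases k <;> cases l <;> rfl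

lemma R6_eq_R6' (x1 x2 r1 r2 : ℂ) : R6 x1 x2 r1 r2 = R6' x1 x2 (r1 ^ 2)⁻¹ (r2 ^ 2)⁻¹ := by
  funext i j k l; cases i <;> cases j <;> cases k <;> cases l <;> rfl

set_option maxHeartbeats 4000000 in
lemma yb_aux (x1 x2 y a1 a2 c : ℂ)
    (hden : x1 - x2 * a2 ≠ 0)
    (hd1 : c * y - x1 ≠ 0) (hd2 : c * y - x2 ≠ 0)
    (i1 i2 i3 j1 j2 j3 : Bool) :
    (∑ k1 : Bool, ∑ k2 : Bool, ∑ k3 : Bool,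
        R6' x1 x2 a1 a2 i2 i1 k2 k1 * W6' x1 y a1 c i3 k1 k3 j1 * W6' x2 y a2 c k3 k2 j3 j2) =
      ∑ k1 : Bool, ∑ k2 : Bool, ∑ k3 : Bool,
        R6' x1 x2 a1 a2 k2 k1 j2 j1 * W6' x2 y a2 c i3 i2 k3 k2 * W6' x1 y a1 c k3 i1 j3 k1 := by
  have hd1' : y * c - x1 ≠ 0 := by rwa [mul_comm]
  have hd2' : y * c - x2 ≠ 0 := by rwa [mul_comm]
  cases i1 <;> cases i2 <;> cases i3 <;> cases j1 <;> cases j2 <;> cases j3 <;>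
    simp only [W6'_f_f_f_f, R6'_f_f_f_f, W6'_f_f_f_t, R6'_f_f_f_t, W6'_f_f_t_f, R6'_f_f_t_f, W6'_f_f_t_t, R6'_f_f_t_t, W6'_f_t_f_f, R6'_f_t_f_f, W6'_f_t_f_t, R6'_f_t_f_t, W6'_f_t_t_f, R6'_f_t_t_f, W6'_f_t_t_t, R6'_f_t_t_t, W6'_t_f_f_f, R6'_t_f_f_f, W6'_t_f_f_t, R6'_t_f_f_t, W6'_t_f_t_f, R6'_t_f_t_f, W6'_t_f_t_t, R6'_t_f_t_t, W6'_t_t_f_f, R6'_t_t_f_f, W6'_t_t_f_t, R6'_t_t_f_t, W6'_t_t_t_f, R6'_t_t_t_f, W6'_t_t_t_t, R6'_t_t_t_t, Fintype.sum_bool] <;>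
    field_simp <;> ring

/-- The Yang–Baxter equation for the cross vertex weights `R` and the free fermion
six vertex weights `W`. -/
theorem yang_baxter (x1 x2 y r1 r2 s : ℂ)
    (hr1 : r1 ≠ 0) (hr2 : r2 ≠ 0) (hs : s ≠ 0)
    (hden : x1 - x2 * (r2 ^ 2)⁻¹ ≠ 0)
    (hd1 : (s ^ 2)⁻¹ * y - x1 ≠ 0) (hd2 : (s ^ 2)⁻¹ * y - x2 ≠ 0)
    (i1 i2 i3 j1 j2 j3 : Bool) :
    (∑ k1 : Bool, ∑ k2 : Bool, ∑ k3 : Bool,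
        R6 x1 x2 r1 r2 i2 i1 k2 k1 * W6 x1 y r1 s i3 k1 k3 j1 * W6 x2 y r2 s k3 k2 j3 j2) =
      ∑ k1 : Bool, ∑ k2 : Bool, ∑ k3 : Bool,
        R6 x1 x2 r1 r2 k2 k1 j2 j1 * W6 x2 y r2 s i3 i2 k3 k2 * W6 x1 y r1 s k3 i1 j3 k1 := by
  simp only [W6_eq_W6', R6_eq_R6']
  exact yb_aux x1 x2 y (r1 ^ 2)⁻¹ (r2 ^ 2)⁻¹ (s ^ 2)⁻¹ hden hd1 hd2 i1 i2 i3 j1 j2 j3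

end
end

section
/- Let A, B, C, D be the 2×2 matrices acting on C^2 with basis e_0, e_1 defined by A e_i = W(i,1;i,1) e_i, B e_i = W(i,0;i-1,1) e_{i-1}, C e_i = W(i,1;i+1,0) e_{i+1}, D e_i = W(i,0;i,0) e_i (with e_{-1} = e_2 = 0), where W = W(·|x; y_k; r; s_k). Then as operators on the tensor product V^{(k_1)} ⊗ ... ⊗ V^{(k_n)} (extended via A(v_1⊗v_2) = Cv_1⊗Bv_2 + Av_1⊗Av_2, B(v_1⊗v_2) = Dv_1⊗Bv_2 + Bv_1⊗Av_2, C(v_1⊗v_2) = Cv_1⊗Dv_2 + Av_1⊗Cv_2, D(v_1⊗v_2) = Dv_1⊗Dv_2 + Bv_1⊗Cv_2), the commutation relation B(x_2,r_2) D(x_1,r_1) = ((r_1^{-2}x_1 - x_2)/(x_1 - x_2)) D(x_1,r_1) B(x_2,r_2) + ((1 - r_2^{-2})x_2/(x_1 - x_2)) D(x_2,r_2) B(x_1,r_1) holds. -/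
noncomputable section

/-- The row operator on the `n`-fold tensor product `V^{(1)} ⊗ ⋯ ⊗ V^{(n)}`
(identified with `(Fin n → Bool) → ℂ`, a basis vector being an occupancy
configuration of the `n` vertical edges), with left horizontal boundary state `a`
and right horizontal boundary state `b`.  Summation over the internal horizontal
edges `h` reproduces the recursive coproduct rules
`A(v₁⊗v₂)=Cv₁⊗Bv₂+Av₁⊗Av₂`, `B(v₁⊗v₂)=Dv₁⊗Bv₂+Bv₁⊗Av₂`,
`C(v₁⊗v₂)=Cv₁⊗Dv₂+Av₁⊗Cv₂`, `D(v₁⊗v₂)=Dv₁⊗Dv₂+Bv₁⊗Cv₂`, where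
`A = rowOp n y s x r true true`, `B = rowOp n y s x r false true`,
`C = rowOp n y s x r true false`, `D = rowOp n y s x r false false`. -/
def rowOp (n : ℕ) (y s : Fin n → ℂ) (x r : ℂ) (a b : Bool) :
    Matrix (Fin n → Bool) (Fin n → Bool) ℂ :=
  Matrix.of fun mOut mIn =>
    ∑ h : Fin (n + 1) → Bool,
      if h 0 = a ∧ h (Fin.last n) = b then
        ∏ c : Fin n, W6 x (y c) r (s c) (mIn c) (h c.castSucc) (mOut c) (h c.succ)
      else 0

namespace BDaux

/-- `W6` with `(r^2)⁻¹` replaced by a free parameter `u`. -/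
def Wu (x y s u : ℂ) : Bool → Bool → Bool → Bool → ℂ
  | false, false, false, false => 1
  | true, true, true, true => (u * x - y) / ((s ^ 2)⁻¹ * y - x)
  | true, false, true, false => ((s ^ 2)⁻¹ * y - u * x) / ((s ^ 2)⁻¹ * y - x)
  | false, true, false, true => (y - x) / ((s ^ 2)⁻¹ * y - x)
  | true, false, false, true => x * (u - 1) / ((s ^ 2)⁻¹ * y - x)
  | false, true, true, false => y * ((s ^ 2)⁻¹ - 1) / ((s ^ 2)⁻¹ * y - x)
  | _, _, _, _ => 0

lemma W6_eq_Wu (x y r s : ℂ) : W6 x y r s = Wu x y s ((r ^ 2)⁻¹) := by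
  funext i j k l
  cases i <;> cases j <;> cases k <;> cases l <;> rfl

/-- `rowOp` with `(r^2)⁻¹` replaced by a free parameter `u`. -/
def rowU (n : ℕ) (y s : Fin n → ℂ) (x u : ℂ) (a b : Bool) :
    Matrix (Fin n → Bool) (Fin n → Bool) ℂ :=
  Matrix.of fun mOut mIn =>
    ∑ h : Fin (n + 1) → Bool,
      if h 0 = a ∧ h (Fin.last n) = b then
        ∏ c : Fin n, Wu x (y c) (s c) u (mIn c) (h c.castSucc) (mOut c) (h c.succ)
      else 0

lemma rowOp_eq_rowU (n : ℕ) (y s : Fin n → ℂ) (x r : ℂ) (a b : Bool) :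
    rowOp n y s x r a b = rowU n y s x ((r ^ 2)⁻¹) a b := by
  unfold rowOp rowU
  simp only [W6_eq_Wu]

/-- The (unnormalized, polynomial) `R`-matrix entries. -/
def Rm (x1 x2 u1 u2 : ℂ) : Bool → Bool → Bool → Bool → ℂ
  | false, false, false, false => u2 * x2 - x1
  | true, true, true, true => u1 * x1 - x2
  | true, false, true, false => u2 * x2 - u1 * x1
  | false, true, false, true => x2 - x1
  | true, false, false, true => x1 * (u1 - 1)
  | false, true, true, false => x2 * (u2 - 1)
  | _, _, _, _ => 0

/-- The `R`-matrix on the tensor square of the auxiliary space. -/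
def RM (x1 x2 u1 u2 : ℂ) : Matrix (Bool × Bool) (Bool × Bool) ℂ :=
  Matrix.of fun p q => Rm x1 x2 u1 u2 p.1 p.2 q.1 q.2

/-- One-column two-row transfer matrix, order row2 above row1. -/
def T21 (x1 x2 u1 u2 yy ss : ℂ) (i o : Bool) : Matrix (Bool × Bool) (Bool × Bool) ℂ :=
  Matrix.of fun k b => ∑ m : Bool, Wu x2 yy ss u2 m k.1 o b.1 * Wu x1 yy ss u1 i k.2 m b.2

/-- One-column two-row transfer matrix, order row1 above row2. -/
def T12 (x1 x2 u1 u2 yy ss : ℂ) (i o : Bool) : Matrix (Bool × Bool) (Bool × Bool) ℂ :=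
  Matrix.of fun k b => ∑ m : Bool, Wu x1 yy ss u1 m k.2 o b.2 * Wu x2 yy ss u2 i k.1 m b.1

/-- Numerators of the `Wu` weights; common denominator `(s^2)⁻¹ * y - x`. -/
def Nu (x y s u : ℂ) : Bool → Bool → Bool → Bool → ℂ
  | false, false, false, false => (s ^ 2)⁻¹ * y - x
  | true, true, true, true => u * x - y
  | true, false, true, false => (s ^ 2)⁻¹ * y - u * x
  | false, true, false, true => y - x
  | true, false, false, true => x * (u - 1)
  | false, true, true, false => y * ((s ^ 2)⁻¹ - 1)
  | _, _, _, _ => 0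

lemma Wu_eq_div (x y s u : ℂ) (h : (s ^ 2)⁻¹ * y - x ≠ 0) (i j k l : Bool) :
    Wu x y s u i j k l = Nu x y s u i j k l / ((s ^ 2)⁻¹ * y - x) := by
  cases i <;> cases j <;> cases k <;> cases l <;>
    simp [Wu, Nu, div_self h, zero_div]

/-- Numerator version of `T21`. -/
def T21N (x1 x2 u1 u2 yy ss : ℂ) (i o : Bool) : Matrix (Bool × Bool) (Bool × Bool) ℂ :=
  Matrix.of fun k b => ∑ m : Bool, Nu x2 yy ss u2 m k.1 o b.1 * Nu x1 yy ss u1 i k.2 m b.2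

/-- Numerator version of `T12`. -/
def T12N (x1 x2 u1 u2 yy ss : ℂ) (i o : Bool) : Matrix (Bool × Bool) (Bool × Bool) ℂ :=
  Matrix.of fun k b => ∑ m : Bool, Nu x1 yy ss u1 m k.2 o b.2 * Nu x2 yy ss u2 i k.1 m b.1

lemma T21_eq (x1 x2 u1 u2 yy ss : ℂ)
    (h1 : (ss ^ 2)⁻¹ * yy - x1 ≠ 0) (h2 : (ss ^ 2)⁻¹ * yy - x2 ≠ 0) (i o : Bool) :
    T21 x1 x2 u1 u2 yy ss i o
      = (((ss ^ 2)⁻¹ * yy - x1) * ((ss ^ 2)⁻¹ * yy - x2))⁻¹ • T21N x1 x2 u1 u2 yy ss i o := by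
  ext k b
  simp only [T21, T21N, Matrix.smul_apply, Matrix.of_apply, smul_eq_mul, Finset.mul_sum]
  refine Finset.sum_congr rfl fun m _ => ?_
  rw [Wu_eq_div x2 yy ss u2 h2, Wu_eq_div x1 yy ss u1 h1]
  field_simp

lemma T12_eq (x1 x2 u1 u2 yy ss : ℂ)
    (h1 : (ss ^ 2)⁻¹ * yy - x1 ≠ 0) (h2 : (ss ^ 2)⁻¹ * yy - x2 ≠ 0) (i o : Bool) :
    T12 x1 x2 u1 u2 yy ss i o
      = (((ss ^ 2)⁻¹ * yy - x1) * ((ss ^ 2)⁻¹ * yy - x2))⁻¹ • T12N x1 x2 u1 u2 yy ss i o := by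
  ext k b
  simp only [T12, T12N, Matrix.smul_apply, Matrix.of_apply, smul_eq_mul, Finset.mul_sum]
  refine Finset.sum_congr rfl fun m _ => ?_
  rw [Wu_eq_div x1 yy ss u1 h1, Wu_eq_div x2 yy ss u2 h2]
  first
  | (field_simp; ring)
  | field_simp

set_option maxHeartbeats 2000000 in
lemma colYBE_N (x1 x2 u1 u2 yy ss : ℂ) (i o : Bool) :
    RM x1 x2 u1 u2 * T21N x1 x2 u1 u2 yy ss i o
      = T12N x1 x2 u1 u2 yy ss i o * RM x1 x2 u1 u2 := by
  ext p q
  rw [Matrix.mul_apply, Matrix.mul_apply]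
  rcases p with ⟨a2, a1⟩; rcases q with ⟨b2, b1⟩
  simp only [RM, T21N, T12N, Matrix.of_apply, Fintype.sum_prod_type, Fintype.sum_bool]
  cases a2 <;> cases a1 <;> cases b2 <;> cases b1 <;> cases i <;> cases o <;>
    simp only [Rm, Nu] <;> ring

lemma colYBE (x1 x2 u1 u2 yy ss : ℂ)
    (h1 : (ss ^ 2)⁻¹ * yy - x1 ≠ 0) (h2 : (ss ^ 2)⁻¹ * yy - x2 ≠ 0) (i o : Bool) :
    RM x1 x2 u1 u2 * T21 x1 x2 u1 u2 yy ss i o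
      = T12 x1 x2 u1 u2 yy ss i o * RM x1 x2 u1 u2 := by
  rw [T21_eq x1 x2 u1 u2 yy ss h1 h2, T12_eq x1 x2 u1 u2 yy ss h1 h2,
    Matrix.mul_smul, Matrix.smul_mul, colYBE_N]

/-- Two-row amplitudes, row2 above row1, as a matrix on the auxiliary tensor square. -/
def E21 (n : ℕ) (y s : Fin n → ℂ) (x1 x2 u1 u2 : ℂ) (mo mi : Fin n → Bool) :
    Matrix (Bool × Bool) (Bool × Bool) ℂ :=
  Matrix.of fun a b => (rowU n y s x2 u2 a.1 b.1 * rowU n y s x1 u1 a.2 b.2) mo mi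

/-- Two-row amplitudes, row1 above row2. -/
def E12 (n : ℕ) (y s : Fin n → ℂ) (x1 x2 u1 u2 : ℂ) (mo mi : Fin n → Bool) :
    Matrix (Bool × Bool) (Bool × Bool) ℂ :=
  Matrix.of fun a b => (rowU n y s x1 u1 a.2 b.2 * rowU n y s x2 u2 a.1 b.1) mo mi

lemma sum_pi_cons (n : ℕ) (f : (Fin (n + 1) → Bool) → ℂ) :
    ∑ h : Fin (n + 1) → Bool, f h = ∑ k : Bool, ∑ g : Fin n → Bool, f (Fin.cons k g) := by
  rw [← (Fin.consEquiv (fun _ => Bool)).sum_comp f, Fintype.sum_prod_type]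
  rfl

lemma rowU_succ (n : ℕ) (y s : Fin (n + 1) → ℂ) (x u : ℂ) (a b : Bool)
    (mo mi : Fin (n + 1) → Bool) :
    rowU (n + 1) y s x u a b mo mi
      = ∑ j : Bool, Wu x (y 0) (s 0) u (mi 0) a (mo 0) j *
          rowU n (y ∘ Fin.succ) (s ∘ Fin.succ) x u j b (mo ∘ Fin.succ) (mi ∘ Fin.succ) := by
  show (∑ h : Fin (n + 2) → Bool,
      if h 0 = a ∧ h (Fin.last (n + 1)) = b then
        ∏ c : Fin (n + 1), Wu x (y c) (s c) u (mi c) (h c.castSucc) (mo c) (h c.succ)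
      else 0) = _
  rw [sum_pi_cons]
  have hlast : Fin.last (n + 1) = (Fin.last n).succ := (Fin.succ_last n).symm
  simp only [hlast, Fin.cons_zero, Fin.cons_succ, Fin.prod_univ_succ, Fin.castSucc_zero,
    ← Fin.succ_castSucc]
  simp only [rowU, Matrix.of_apply, Finset.mul_sum, mul_ite, mul_zero, Function.comp_apply]
  rw [Finset.sum_comm]
  conv_rhs => rw [Finset.sum_comm]
  refine Finset.sum_congr rfl fun g _ => ?_
  cases a <;> cases hb0 : g 0 <;> by_cases hb : g (Fin.last n) = b <;>
    simp [Fintype.sum_bool, hb, hb0]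

lemma cons_comp_succ {n : ℕ} (m : Bool) (g : Fin n → Bool) :
    Fin.cons m g ∘ Fin.succ = g := by
  funext i; simp

lemma E21_succ (n : ℕ) (y s : Fin (n + 1) → ℂ) (x1 x2 u1 u2 : ℂ)
    (mo mi : Fin (n + 1) → Bool) :
    E21 (n + 1) y s x1 x2 u1 u2 mo mi
      = T21 x1 x2 u1 u2 (y 0) (s 0) (mi 0) (mo 0) *
          E21 n (y ∘ Fin.succ) (s ∘ Fin.succ) x1 x2 u1 u2 (mo ∘ Fin.succ) (mi ∘ Fin.succ) := by
  ext a b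
  show (rowU (n + 1) y s x2 u2 a.1 b.1 * rowU (n + 1) y s x1 u1 a.2 b.2) mo mi = _
  rw [Matrix.mul_apply, Matrix.mul_apply]
  simp only [rowU_succ, Finset.sum_mul_sum, T21, E21, Matrix.of_apply, Matrix.mul_apply]
  rw [sum_pi_cons]
  simp only [Fin.cons_zero, cons_comp_succ, Fintype.sum_prod_type, Fintype.sum_bool,
    Finset.mul_sum, Finset.sum_mul, ← Finset.sum_add_distrib]
  exact Finset.sum_congr rfl fun g _ => by ring

lemma E12_succ (n : ℕ) (y s : Fin (n + 1) → ℂ) (x1 x2 u1 u2 : ℂ)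
    (mo mi : Fin (n + 1) → Bool) :
    E12 (n + 1) y s x1 x2 u1 u2 mo mi
      = T12 x1 x2 u1 u2 (y 0) (s 0) (mi 0) (mo 0) *
          E12 n (y ∘ Fin.succ) (s ∘ Fin.succ) x1 x2 u1 u2 (mo ∘ Fin.succ) (mi ∘ Fin.succ) := by
  ext a b
  show (rowU (n + 1) y s x1 u1 a.2 b.2 * rowU (n + 1) y s x2 u2 a.1 b.1) mo mi = _
  rw [Matrix.mul_apply, Matrix.mul_apply]
  simp only [rowU_succ, Finset.sum_mul_sum, T12, E12, Matrix.of_apply, Matrix.mul_apply]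
  rw [sum_pi_cons]
  simp only [Fin.cons_zero, cons_comp_succ, Fintype.sum_prod_type, Fintype.sum_bool,
    Finset.mul_sum, Finset.sum_mul, ← Finset.sum_add_distrib]
  exact Finset.sum_congr rfl fun g _ => by ring

lemma rowU_zero (y s : Fin 0 → ℂ) (x u : ℂ) (a b : Bool) (mo mi : Fin 0 → Bool) :
    rowU 0 y s x u a b mo mi = if a = b then 1 else 0 := by
  show (∑ h : Fin 1 → Bool,
      if h 0 = a ∧ h (Fin.last 0) = b then
        ∏ c : Fin 0, Wu x (y c) (s c) u (mi c) (h c.castSucc) (mo c) (h c.succ)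
      else 0) = _
  rw [sum_pi_cons]
  have h0 : Fin.last 0 = 0 := rfl
  cases a <;> cases b <;>
    simp [h0, Fintype.sum_bool]

lemma E21_zero (y s : Fin 0 → ℂ) (x1 x2 u1 u2 : ℂ) (mo mi : Fin 0 → Bool) :
    E21 0 y s x1 x2 u1 u2 mo mi = 1 := by
  ext a b
  show (rowU 0 y s x2 u2 a.1 b.1 * rowU 0 y s x1 u1 a.2 b.2) mo mi = (1 : Matrix (Bool × Bool) (Bool × Bool) ℂ) a b
  rw [Matrix.mul_apply, Matrix.one_apply]
  simp only [rowU_zero]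
  rcases a with ⟨a1, a2⟩; rcases b with ⟨b1, b2⟩
  simp only [Prod.mk.injEq, Prod.ext_iff]
  rcases eq_or_ne a1 b1 with h1 | h1 <;> rcases eq_or_ne a2 b2 with h2 | h2 <;>
    simp [h1, h2]

lemma E12_zero (y s : Fin 0 → ℂ) (x1 x2 u1 u2 : ℂ) (mo mi : Fin 0 → Bool) :
    E12 0 y s x1 x2 u1 u2 mo mi = 1 := by
  ext a b
  show (rowU 0 y s x1 u1 a.2 b.2 * rowU 0 y s x2 u2 a.1 b.1) mo mi = (1 : Matrix (Bool × Bool) (Bool × Bool) ℂ) a b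
  rw [Matrix.mul_apply, Matrix.one_apply]
  simp only [rowU_zero]
  rcases a with ⟨a1, a2⟩; rcases b with ⟨b1, b2⟩
  simp only [Prod.mk.injEq, Prod.ext_iff]
  rcases eq_or_ne a1 b1 with h1 | h1 <;> rcases eq_or_ne a2 b2 with h2 | h2 <;>
    simp [h1, h2]

lemma RTT (n : ℕ) (y s : Fin n → ℂ) (x1 x2 u1 u2 : ℂ)
    (hden1 : ∀ c, (s c ^ 2)⁻¹ * y c - x1 ≠ 0)
    (hden2 : ∀ c, (s c ^ 2)⁻¹ * y c - x2 ≠ 0)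
    (mo mi : Fin n → Bool) :
    RM x1 x2 u1 u2 * E21 n y s x1 x2 u1 u2 mo mi
      = E12 n y s x1 x2 u1 u2 mo mi * RM x1 x2 u1 u2 := by
  induction n with
  | zero => rw [E21_zero, E12_zero, mul_one, one_mul]
  | succ n ih =>
      rw [E21_succ, E12_succ, ← mul_assoc, colYBE x1 x2 u1 u2 (y 0) (s 0)
          (by simpa using hden1 0) (by simpa using hden2 0) (mi 0) (mo 0), mul_assoc,
        ih (y ∘ Fin.succ) (s ∘ Fin.succ) (fun c => hden1 c.succ) (fun c => hden2 c.succ),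
        ← mul_assoc]

/-- The cleared-denominator commutation relation, assuming `u2 * x2 - x1 ≠ 0`. -/
lemma BD_cleared (n : ℕ) (y s : Fin n → ℂ) (x1 x2 u1 u2 : ℂ)
    (hden1 : ∀ c, (s c ^ 2)⁻¹ * y c - x1 ≠ 0)
    (hden2 : ∀ c, (s c ^ 2)⁻¹ * y c - x2 ≠ 0)
    (hd : u2 * x2 - x1 ≠ 0) :
    (x1 - x2) • (rowU n y s x2 u2 false true * rowU n y s x1 u1 false false) =
      (u1 * x1 - x2) • (rowU n y s x1 u1 false false * rowU n y s x2 u2 false true) +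
        ((1 - u2) * x2) • (rowU n y s x2 u2 false false * rowU n y s x1 u1 false true) := by
  ext mo mi
  have hR := RTT n y s x1 x2 u1 u2 hden1 hden2 mo mi
  have E1 : (RM x1 x2 u1 u2 * E21 n y s x1 x2 u1 u2 mo mi) (false, false) (true, false)
      = (E12 n y s x1 x2 u1 u2 mo mi * RM x1 x2 u1 u2) (false, false) (true, false) := by
    rw [hR]
  have E2 : (RM x1 x2 u1 u2 * E21 n y s x1 x2 u1 u2 mo mi) (false, false) (false, true)
      = (E12 n y s x1 x2 u1 u2 mo mi * RM x1 x2 u1 u2) (false, false) (false, true) := by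
    rw [hR]
  simp only [Matrix.mul_apply, Fintype.sum_prod_type, Fintype.sum_bool, RM, Matrix.of_apply,
    Rm, zero_mul, mul_zero, zero_add, add_zero] at E1 E2
  simp only [Matrix.add_apply, Matrix.smul_apply, smul_eq_mul]
  have hX : (rowU n y s x2 u2 false true * rowU n y s x1 u1 false false) mo mi
      = E21 n y s x1 x2 u1 u2 mo mi (false, false) (true, false) := rfl
  have hY : (rowU n y s x1 u1 false false * rowU n y s x2 u2 false true) mo mi
      = E12 n y s x1 x2 u1 u2 mo mi (false, false) (true, false) := rfl
  have hZ : (rowU n y s x2 u2 false false * rowU n y s x1 u1 false true) mo mi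
      = E21 n y s x1 x2 u1 u2 mo mi (false, false) (false, true) := rfl
  rw [hX, hY, hZ]
  have h0 : (u2 * x2 - x1) *
      ((x1 - x2) * E21 n y s x1 x2 u1 u2 mo mi (false, false) (true, false)
        - ((u1 * x1 - x2) * E12 n y s x1 x2 u1 u2 mo mi (false, false) (true, false)
          + (1 - u2) * x2 * E21 n y s x1 x2 u1 u2 mo mi (false, false) (false, true))) = 0 := by
    linear_combination (x1 - x2) * E1 - (1 - u2) * x2 * E2
  have h1 := (mul_eq_zero.1 h0).resolve_left hd
  linear_combination h1

/-- `Wu` with `u` replaced by a polynomial variable. -/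
def WuX (x y s : ℂ) : Bool → Bool → Bool → Bool → Polynomial ℂ
  | false, false, false, false => 1
  | true, true, true, true =>
      Polynomial.C (((s ^ 2)⁻¹ * y - x)⁻¹) * (Polynomial.X * Polynomial.C x - Polynomial.C y)
  | true, false, true, false =>
      Polynomial.C (((s ^ 2)⁻¹ * y - x)⁻¹) *
        (Polynomial.C ((s ^ 2)⁻¹ * y) - Polynomial.X * Polynomial.C x)
  | false, true, false, true => Polynomial.C ((y - x) / ((s ^ 2)⁻¹ * y - x))
  | true, false, false, true =>
      Polynomial.C (x / ((s ^ 2)⁻¹ * y - x)) * (Polynomial.X - 1)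
  | false, true, true, false => Polynomial.C (y * ((s ^ 2)⁻¹ - 1) / ((s ^ 2)⁻¹ * y - x))
  | _, _, _, _ => 0

lemma WuX_eval (x y s t : ℂ) (i j k l : Bool) :
    (WuX x y s i j k l).eval t = Wu x y s t i j k l := by
  cases i <;> cases j <;> cases k <;> cases l <;>
    simp [WuX, Wu, div_eq_mul_inv] <;> ring

/-- `rowU` with `u` replaced by a polynomial variable. -/
def rowX (n : ℕ) (y s : Fin n → ℂ) (x : ℂ) (a b : Bool) :
    Matrix (Fin n → Bool) (Fin n → Bool) (Polynomial ℂ) :=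
  Matrix.of fun mOut mIn =>
    ∑ h : Fin (n + 1) → Bool,
      if h 0 = a ∧ h (Fin.last n) = b then
        ∏ c : Fin n, WuX x (y c) (s c) (mIn c) (h c.castSucc) (mOut c) (h c.succ)
      else 0

lemma rowX_eval (n : ℕ) (y s : Fin n → ℂ) (x t : ℂ) (a b : Bool) (mo mi : Fin n → Bool) :
    (rowX n y s x a b mo mi).eval t = rowU n y s x t a b mo mi := by
  simp only [rowX, rowU, Matrix.of_apply, Polynomial.eval_finset_sum]
  refine Finset.sum_congr rfl fun h _ => ?_
  rw [apply_ite (Polynomial.eval t)]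
  simp [Polynomial.eval_prod, WuX_eval]

/-- The cleared-denominator commutation relation, without side condition. -/
lemma BD_poly (n : ℕ) (y s : Fin n → ℂ) (x1 x2 u1 u2 : ℂ)
    (hx : x1 ≠ x2)
    (hden1 : ∀ c, (s c ^ 2)⁻¹ * y c - x1 ≠ 0)
    (hden2 : ∀ c, (s c ^ 2)⁻¹ * y c - x2 ≠ 0) :
    (x1 - x2) • (rowU n y s x2 u2 false true * rowU n y s x1 u1 false false) =
      (u1 * x1 - x2) • (rowU n y s x1 u1 false false * rowU n y s x2 u2 false true) +
        ((1 - u2) * x2) • (rowU n y s x2 u2 false false * rowU n y s x1 u1 false true) := by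
  ext mo mi
  set q : Polynomial ℂ :=
    Polynomial.C (x1 - x2) *
        ((rowX n y s x2 false true * (rowU n y s x1 u1 false false).map Polynomial.C) mo mi)
      - (Polynomial.C (u1 * x1 - x2) *
          (((rowU n y s x1 u1 false false).map Polynomial.C * rowX n y s x2 false true) mo mi)
        + (1 - Polynomial.X) * Polynomial.C x2 *
          ((rowX n y s x2 false false * (rowU n y s x1 u1 false true).map Polynomial.C) mo mi))
    with hq
  have heval : ∀ t : ℂ, q.eval t
      = (x1 - x2) * (rowU n y s x2 t false true * rowU n y s x1 u1 false false) mo mi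
        - ((u1 * x1 - x2) * (rowU n y s x1 u1 false false * rowU n y s x2 t false true) mo mi
          + (1 - t) * x2 * (rowU n y s x2 t false false * rowU n y s x1 u1 false true) mo mi) := by
    intro t
    simp only [hq, Matrix.mul_apply, Matrix.map_apply, Polynomial.eval_sub, Polynomial.eval_add,
      Polynomial.eval_mul, Polynomial.eval_C, Polynomial.eval_one, Polynomial.eval_X,
      Polynomial.eval_finset_sum, Polynomial.eval_sub, Polynomial.eval_one, rowX_eval]
  have hzero : ∀ t : ℂ, x2 * t - x1 ≠ 0 → q.eval t = 0 := by
    intro t ht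
    have hc := BD_cleared n y s x1 x2 u1 t hden1 hden2 (by rwa [mul_comm] at ht)
    have hce := congrFun (congrFun hc mo) mi
    simp only [Matrix.add_apply, Matrix.smul_apply, smul_eq_mul] at hce
    rw [heval t]
    linear_combination hce
  have hfin : {t : ℂ | x2 * t - x1 = 0}.Finite := by
    rcases eq_or_ne x2 0 with h | h
    · refine Set.Finite.subset Set.finite_empty fun t ht => ?_
      simp only [Set.mem_setOf_eq, h, zero_mul, zero_sub, neg_eq_zero] at ht
      exact absurd (ht.trans h.symm) hx
    · refine Set.Finite.subset (Set.finite_singleton (x1 / x2)) fun t ht => ?_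
      simp only [Set.mem_setOf_eq, sub_eq_zero] at ht
      simp [Set.mem_singleton_iff, eq_div_iff h, mul_comm, ht]
  have hinf : {t : ℂ | Polynomial.IsRoot q t}.Infinite := by
    have hsub : {t : ℂ | x2 * t - x1 ≠ 0} ⊆ {t : ℂ | Polynomial.IsRoot q t} :=
      fun t ht => hzero t ht
    refine Set.Infinite.mono hsub ?_
    have hcompl : {t : ℂ | x2 * t - x1 ≠ 0} = {t : ℂ | x2 * t - x1 = 0}ᶜ := by
      ext t; simp
    rw [hcompl]
    exact hfin.infinite_compl
  have hq0 : q = 0 := Polynomial.eq_zero_of_infinite_isRoot q hinf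
  have := heval u2
  rw [hq0] at this
  simp only [Polynomial.eval_zero] at this
  simp only [Matrix.add_apply, Matrix.smul_apply, smul_eq_mul]
  linear_combination -this

end BDaux

/-- The commutation relation
`B(x₂,r₂) D(x₁,r₁) = ((r₁⁻²x₁ - x₂)/(x₁ - x₂)) D(x₁,r₁) B(x₂,r₂)
  + ((1 - r₂⁻²)x₂/(x₁ - x₂)) D(x₂,r₂) B(x₁,r₁)`
for the row operators built from the free fermion six vertex weights, acting on
an arbitrary `n`-fold tensor product. -/
theorem BD_commutation (n : ℕ) (y s : Fin n → ℂ) (x1 x2 r1 r2 : ℂ)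
    (hx : x1 ≠ x2) (hr1 : r1 ≠ 0) (hr2 : r2 ≠ 0)
    (hs : ∀ c, s c ≠ 0)
    (hden1 : ∀ c, (s c ^ 2)⁻¹ * y c - x1 ≠ 0)
    (hden2 : ∀ c, (s c ^ 2)⁻¹ * y c - x2 ≠ 0) :
    rowOp n y s x2 r2 false true * rowOp n y s x1 r1 false false =
      (((r1 ^ 2)⁻¹ * x1 - x2) / (x1 - x2)) •
          (rowOp n y s x1 r1 false false * rowOp n y s x2 r2 false true) +
        ((1 - (r2 ^ 2)⁻¹) * x2 / (x1 - x2)) •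
          (rowOp n y s x2 r2 false false * rowOp n y s x1 r1 false true) := by
  simp only [BDaux.rowOp_eq_rowU]
  have h12 : x1 - x2 ≠ 0 := sub_ne_zero.2 hx
  have key := BDaux.BD_poly n y s x1 x2 ((r1 ^ 2)⁻¹) ((r2 ^ 2)⁻¹) hx hden1 hden2
  ext mo mi
  have ke := congrFun (congrFun key mo) mi
  simp only [Matrix.add_apply, Matrix.smul_apply, smul_eq_mul] at ke ⊢
  rw [div_mul_eq_mul_div, div_mul_eq_mul_div, ← add_div, eq_comm, div_eq_iff h12]
  linear_combination -ke

end
end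

section
/- (Factorial Schur as five vertex partition function) There is a weight-preserving bijection between semistandard Young tableaux of shape λ with entries in {1,...,N}, and path configurations of the five vertex model in the half-infinite strip Z≥1 × {1,...,N} with paths entering from the bottom at positions S(λ) = {λ_j + N - j + 1 : 1 ≤ j ≤ N} and exiting through the right boundary (left and top boundaries empty; the vertex (1,1;1,1) forbidden). With the weights w(0,0;0,0) = x_{N+1-j} + y_i at position (i,j), w(1,1;1,1) = 0, and all other four admissible vertex weights equal to 1, the resulting partition function equals the factorial Schur polynomial s_λ(x | y) = ∑_T ∏_{(i,j)∈λ} (x_{T(i,j)} + y_{T(i,j)+j-i}). -/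
open Finset

noncomputable section

/-- A semistandard Young tableau of shape `λ` (a partition with at most `N`
rows, given `1`-based as `lam : ℕ → ℕ`) with entries in `{1,…,N}`:
`T i j` is the entry in row `i`, column `j` (`1`-based), `T` vanishes outside
the diagram, rows weakly increase, columns strictly increase. -/
def TabOK (N : ℕ) (lam : ℕ → ℕ) (T : ℕ → ℕ → ℕ) : Prop :=
  (∀ i j : ℕ, (i = 0 ∨ N < i ∨ j = 0 ∨ lam i < j) → T i j = 0) ∧
    (∀ i ∈ Icc 1 N, ∀ j : ℕ, 1 ≤ j → j ≤ lam i → 1 ≤ T i j ∧ T i j ≤ N) ∧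
    (∀ i ∈ Icc 1 N, ∀ j : ℕ, 1 ≤ j → j + 1 ≤ lam i → T i j ≤ T i (j + 1)) ∧
    (∀ i : ℕ, 1 ≤ i → i + 1 ≤ N → ∀ j : ℕ, 1 ≤ j → j ≤ lam (i + 1) → T i j < T (i + 1) j)

/-- The factorial weight `∏_{(i,j)∈λ} (x_{T(i,j)} + y_{T(i,j)+j-i})` of a
tableau. -/
def tabWt (N : ℕ) (lam : ℕ → ℕ) (x y : ℕ → ℂ) (T : ℕ → ℕ → ℕ) : ℂ :=
  ∏ i ∈ Icc 1 N, ∏ j ∈ Icc 1 (lam i), (x (T i j) + y (T i j + j - i))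

/-- A five vertex path configuration in the half-infinite strip
`ℤ_{≥1} × {1,…,N}` with paths entering from the bottom at the positions
`S(λ) = {λ_t + N - t + 1 : 1 ≤ t ≤ N}` and exiting through the right boundary
(left and top boundaries empty; the vertex `(1,1;1,1)` forbidden).  The
configuration is encoded by the vertical edge occupancies: `g k t` is the
`t`-th largest occupied column between row `k` and row `k + 1`
(`k = 0` being the bottom boundary); level `k` carries `N - k` paths, one path
exits to the right in each row, and the five vertex (non-crossing) condition
reads `g (k-1) (t+1) ≤ g k t < g (k-1) t`. -/
def ConfOK (N : ℕ) (lam : ℕ → ℕ) (g : ℕ → ℕ → ℕ) : Prop :=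
  (∀ k t : ℕ, (N < k ∨ t = 0 ∨ N - k < t) → g k t = 0) ∧
    (∀ t ∈ Icc 1 N, g 0 t = lam t + (N - t) + 1) ∧
    ∀ k ∈ Icc 1 N, ∀ t ∈ Icc 1 (N - k), g (k - 1) (t + 1) ≤ g k t ∧ g k t < g (k - 1) t

/-- The weight of a configuration: the product over all empty vertices `(c, k)`
(row `k`, column `c`) of `x_{N+1-k} + y_c`; all other admissible vertex weights
are `1`.  The empty columns of row `k` are the gaps
`g k t < c < g (k-1) t`, `t = 1, …, N - k + 1`. -/
def confWt (N : ℕ) (x y : ℕ → ℂ) (g : ℕ → ℕ → ℕ) : ℂ :=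
  ∏ k ∈ Icc 1 N, ∏ t ∈ Icc 1 (N - k + 1),
    ∏ c ∈ Finset.Ioo (g k t) (g (k - 1) t), (x (N + 1 - k) + y c)


namespace FSFV

def muT (lam : ℕ → ℕ) (T : ℕ → ℕ → ℕ) (m t : ℕ) : ℕ :=
  ((Icc 1 (lam t)).filter (fun j => T t j ≤ m)).card

def toConf (N : ℕ) (lam : ℕ → ℕ) (T : ℕ → ℕ → ℕ) (k t : ℕ) : ℕ :=
  if k ≤ N ∧ 1 ≤ t ∧ t ≤ N - k then muT lam T (N - k) t + ((N - k) - t) + 1 else 0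

def nuC (N : ℕ) (g : ℕ → ℕ → ℕ) (m t : ℕ) : ℕ := g (N - m) t - (m - t) - 1

def toTab (N : ℕ) (lam : ℕ → ℕ) (g : ℕ → ℕ → ℕ) (t j : ℕ) : ℕ :=
  if 1 ≤ t ∧ t ≤ N ∧ 1 ≤ j ∧ j ≤ lam t then
    ((range N).filter (fun m => nuC N g m t < j)).card else 0

section Tab
variable {N : ℕ} {lam : ℕ → ℕ} {T : ℕ → ℕ → ℕ}

lemma rowMono (hT : TabOK N lam T) {t j1 j2 : ℕ} (ht1 : 1 ≤ t) (ht2 : t ≤ N)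
    (hj1 : 1 ≤ j1) (h12 : j1 ≤ j2) (hj2 : j2 ≤ lam t) : T t j1 ≤ T t j2 := by
  have H : ∀ d, j1 + d ≤ lam t → T t j1 ≤ T t (j1 + d) := by
    intro d
    induction d with
    | zero => simp
    | succ d ih =>
      intro hd
      have h1 := ih (by omega)
      have h2 := hT.2.2.1 t (mem_Icc.2 ⟨ht1, ht2⟩) (j1 + d) (by omega) (by omega)
      show T t j1 ≤ T t (j1 + d + 1)
      omega
  have := H (j2 - j1) (by omega)
  have hh : j1 + (j2 - j1) = j2 := by omega
  rwa [hh] at this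

lemma colGe (hlam : ∀ i j : ℕ, 1 ≤ i → i ≤ j → j ≤ N → lam j ≤ lam i)
    (hT : TabOK N lam T) {t j : ℕ} (ht1 : 1 ≤ t) (ht2 : t ≤ N)
    (hj1 : 1 ≤ j) (hj2 : j ≤ lam t) : t ≤ T t j := by
  induction t with
  | zero => omega
  | succ t ih =>
    rcases Nat.eq_or_lt_of_le ht1 with h | h
    · have := (hT.2.1 (t+1) (mem_Icc.2 ⟨ht1, ht2⟩) j hj1 hj2).1
      omega
    · have h1 : 1 ≤ t := by omega
      have hlt : lam (t+1) ≤ lam t := hlam t (t+1) h1 (by omega) ht2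
      have := hT.2.2.2 t h1 ht2 j hj1 hj2
      have := ih (by omega) (by omega) (by omega)
      omega

lemma muT_le {m t : ℕ} : muT lam T m t ≤ lam t := by
  have h := card_filter_le (Icc 1 (lam t)) (fun j => T t j ≤ m)
  simpa [Nat.card_Icc, muT] using h

lemma muT_mono {m m' t : ℕ} (h : m ≤ m') : muT lam T m t ≤ muT lam T m' t := by
  apply card_le_card
  intro j hj
  rw [mem_filter] at hj ⊢
  exact ⟨hj.1, le_trans hj.2 h⟩

lemma muT_iff (hT : TabOK N lam T) {m t j : ℕ} (ht1 : 1 ≤ t) (ht2 : t ≤ N)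
    (hj1 : 1 ≤ j) (hj2 : j ≤ lam t) : T t j ≤ m ↔ j ≤ muT lam T m t := by
  constructor
  · intro h
    have hsub : Icc 1 j ⊆ (Icc 1 (lam t)).filter (fun j' => T t j' ≤ m) := by
      intro j' hj'
      rw [mem_Icc] at hj'
      rw [mem_filter, mem_Icc]
      refine ⟨⟨hj'.1, by omega⟩, le_trans (rowMono hT ht1 ht2 hj'.1 hj'.2 hj2) h⟩
    have := card_le_card hsub
    simpa [Nat.card_Icc, muT] using this
  · intro h
    by_contra hc
    push_neg at hc
    have hsub : (Icc 1 (lam t)).filter (fun j' => T t j' ≤ m) ⊆ Icc 1 (j-1) := by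
      intro j' hj'
      rw [mem_filter, mem_Icc] at hj'
      rw [mem_Icc]
      refine ⟨hj'.1.1, ?_⟩
      by_contra hc'
      push_neg at hc'
      have := rowMono hT ht1 ht2 hj1 (by omega : j ≤ j') hj'.1.2
      omega
    have := card_le_card hsub
    rw [Nat.card_Icc] at this
    unfold muT at h
    omega

lemma muT_zero (hlam0 : ∀ i : ℕ, i = 0 ∨ N < i → lam i = 0)
    (hlam : ∀ i j : ℕ, 1 ≤ i → i ≤ j → j ≤ N → lam j ≤ lam i)
    (hT : TabOK N lam T) {m t : ℕ} (h : m < t) : muT lam T m t = 0 := by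
  rcases Nat.lt_or_ge N t with hN | hN
  · have : lam t = 0 := hlam0 t (Or.inr hN)
    simp [muT, this]
  · rw [muT, card_eq_zero, filter_eq_empty_iff]
    intro j hj
    rw [mem_Icc] at hj
    have := colGe hlam hT (by omega : 1 ≤ t) hN hj.1 hj.2
    omega

lemma muT_N (hT : TabOK N lam T) {t : ℕ} (ht1 : 1 ≤ t) (ht2 : t ≤ N) :
    muT lam T N t = lam t := by
  rw [muT, filter_true_of_mem, Nat.card_Icc]
  · omega
  · intro j hj
    rw [mem_Icc] at hj
    exact (hT.2.1 t (mem_Icc.2 ⟨ht1, ht2⟩) j hj.1 hj.2).2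

lemma muT_interlace (hlam : ∀ i j : ℕ, 1 ≤ i → i ≤ j → j ≤ N → lam j ≤ lam i)
    (hT : TabOK N lam T) {m t : ℕ} (ht1 : 1 ≤ t) (ht2 : t + 1 ≤ N) :
    muT lam T (m + 1) (t + 1) ≤ muT lam T m t := by
  set j := muT lam T (m+1) (t+1) with hj
  rcases Nat.eq_zero_or_pos j with h0 | h0
  · omega
  have hjle : j ≤ lam (t+1) := muT_le
  have hTle : T (t+1) j ≤ m + 1 :=
    (muT_iff hT (by omega) ht2 h0 hjle).2 (le_refl _)
  have hcol := hT.2.2.2 t ht1 ht2 j h0 hjle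
  have hjlt : j ≤ lam t := le_trans hjle (hlam t (t+1) ht1 (by omega) ht2)
  exact (muT_iff hT ht1 (by omega) h0 hjlt).1 (by omega)

lemma toConf_ok (hlam0 : ∀ i : ℕ, i = 0 ∨ N < i → lam i = 0)
    (hlam : ∀ i j : ℕ, 1 ≤ i → i ≤ j → j ≤ N → lam j ≤ lam i)
    (hT : TabOK N lam T) : ConfOK N lam (toConf N lam T) := by
  refine ⟨?_, ?_, ?_⟩
  · intro k t h
    rw [toConf, if_neg]
    omega
  · intro t ht
    rw [mem_Icc] at ht
    rw [toConf, if_pos (by omega)]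
    simp only [Nat.sub_zero]
    rw [muT_N hT ht.1 ht.2]
  · intro k hk t ht
    rw [mem_Icc] at hk ht
    have hk1 : (1:ℕ) ≤ k := hk.1
    have hkN : k ≤ N := hk.2
    have ht1 : (1:ℕ) ≤ t := ht.1
    have htk : t ≤ N - k := ht.2
    set m := N - k with hm
    have e1 : toConf N lam T k t = muT lam T m t + (m - t) + 1 := by
      rw [toConf, if_pos ⟨hkN, ht1, htk⟩]
    have e2 : toConf N lam T (k-1) (t+1) = muT lam T (m+1) (t+1) + (m - t) + 1 := by
      rw [toConf, if_pos (by omega)]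
      have : N - (k-1) = m + 1 := by omega
      rw [this]
      have : m + 1 - (t+1) = m - t := by omega
      rw [this]
    have e3 : toConf N lam T (k-1) t = muT lam T (m+1) t + (m + 1 - t) + 1 := by
      rw [toConf, if_pos (by omega)]
      have : N - (k-1) = m + 1 := by omega
      rw [this]
    rw [e1, e2, e3]
    have h1 : muT lam T (m+1) (t+1) ≤ muT lam T m t :=
      muT_interlace hlam hT ht1 (by omega)
    have h2 : muT lam T m t ≤ muT lam T (m+1) t := muT_mono (by omega)
    omega

end Tab

end FSFV

namespace FSFV
section Conf
variable {N : ℕ} {lam : ℕ → ℕ} {g : ℕ → ℕ → ℕ}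

lemma g_pos (hg : ConfOK N lam g) : ∀ k, k ≤ N → 1 ≤ N - k → 1 ≤ g k (N - k) := by
  intro k
  induction k with
  | zero =>
    intro _ h
    have := hg.2.1 N (mem_Icc.2 ⟨by omega, le_refl N⟩)
    simp only [Nat.sub_zero] at *
    omega
  | succ k ih =>
    intro hk h
    have h1 := (hg.2.2 (k+1) (mem_Icc.2 ⟨by omega, hk⟩) (N - (k+1))
      (mem_Icc.2 ⟨h, le_refl _⟩)).1
    have h2 := ih (by omega) (by omega)
    have e : N - (k+1) + 1 = N - k := by omega
    rw [e] at h1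
    simp only [Nat.add_sub_cancel] at h1
    omega

lemma g_lb (hg : ConfOK N lam g) : ∀ k t, k ≤ N → 1 ≤ t → t ≤ N - k →
    N - k + 1 ≤ g k t + t := by
  have H : ∀ d k t, N - k - t ≤ d → k ≤ N → 1 ≤ t → t ≤ N - k →
      N - k + 1 ≤ g k t + t := by
    intro d
    induction d with
    | zero =>
      intro k t h0 hk h1 h2
      have ht : t = N - k := by omega
      subst ht
      have := g_pos hg k hk (by omega)
      omega
    | succ d ih =>
      intro k t h0 hk h1 h2
      rcases Nat.eq_or_lt_of_le h2 with he | hlt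
      · subst he
        have := g_pos hg k hk (by omega)
        omega
      · rcases Nat.eq_zero_or_pos k with hk0 | hk0
        · subst hk0
          have := hg.2.1 t (mem_Icc.2 ⟨h1, by omega⟩)
          simp only [Nat.sub_zero] at *
          omega
        · have ih1 := ih k (t+1) (by omega) hk (by omega) (by omega)
          have ha := (hg.2.2 k (mem_Icc.2 ⟨hk0, hk⟩) t
            (mem_Icc.2 ⟨h1, h2⟩)).1
          have hb := (hg.2.2 k (mem_Icc.2 ⟨hk0, hk⟩) (t+1)
            (mem_Icc.2 ⟨by omega, by omega⟩)).2
          omega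
  intro k t hk h1 h2
  exact H (N - k - t) k t le_rfl hk h1 h2

lemma nuC_eq (hg : ConfOK N lam g) {m t : ℕ} (ht : 1 ≤ t) (htm : t ≤ m) (hm : m ≤ N) :
    nuC N g m t + (m - t) + 1 = g (N - m) t := by
  have h := g_lb hg (N - m) t (by omega) ht (by omega)
  have e : N - (N - m) = m := by omega
  rw [e] at h
  rw [nuC]
  omega

lemma nuC_zero (hg : ConfOK N lam g) {m t : ℕ} (hm : m ≤ N) (h : m < t ∨ t = 0) :
    nuC N g m t = 0 := by
  have hz : g (N - m) t = 0 := by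
    apply hg.1
    rcases h with h | h
    · right; right; omega
    · right; left; exact h
  rw [nuC, hz]
  omega

lemma nuC_N (hg : ConfOK N lam g) {t : ℕ} (ht1 : 1 ≤ t) (ht2 : t ≤ N) :
    nuC N g N t = lam t := by
  have h := hg.2.1 t (mem_Icc.2 ⟨ht1, ht2⟩)
  rw [nuC]
  simp only [Nat.sub_self]
  rw [h]
  omega

lemma nuC_mono_step (hg : ConfOK N lam g) {m t : ℕ} (ht : 1 ≤ t) (hm : m + 1 ≤ N) :
    nuC N g m t ≤ nuC N g (m + 1) t := by
  rcases Nat.lt_or_ge m t with h | h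
  · rw [nuC_zero hg (by omega) (Or.inl h)]
    omega
  · have e1 := nuC_eq hg ht h (by omega)
    have e2 := nuC_eq hg ht (by omega) hm
    have hb := (hg.2.2 (N - m) (mem_Icc.2 ⟨by omega, by omega⟩) t
      (mem_Icc.2 ⟨ht, by omega⟩)).2
    have e : N - m - 1 = N - (m + 1) := by omega
    rw [e] at hb
    omega

lemma nuC_mono (hg : ConfOK N lam g) {m m' t : ℕ} (ht : 1 ≤ t) (h : m ≤ m') (hm : m' ≤ N) :
    nuC N g m t ≤ nuC N g m' t := by
  induction m' with
  | zero =>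
    have hm0 : m = 0 := by omega
    subst hm0
    exact le_refl _
  | succ m'' ih =>
    rcases Nat.eq_or_lt_of_le h with he | hlt
    · subst he; exact le_refl _
    · exact le_trans (ih (by omega) (by omega)) (nuC_mono_step hg ht hm)

lemma nuC_interlace (hg : ConfOK N lam g) {m t : ℕ} (ht : 1 ≤ t) (htm : t ≤ m)
    (hm : m + 1 ≤ N) : nuC N g (m + 1) (t + 1) ≤ nuC N g m t := by
  have e1 := nuC_eq hg (by omega) (by omega : t + 1 ≤ m + 1) hm
  have e2 := nuC_eq hg ht htm (by omega)
  have ha := (hg.2.2 (N - m) (mem_Icc.2 ⟨by omega, by omega⟩) t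
    (mem_Icc.2 ⟨ht, by omega⟩)).1
  have e : N - m - 1 = N - (m + 1) := by omega
  rw [e] at ha
  have e' : m + 1 - (t + 1) = m - t := by omega
  rw [e'] at e1
  omega

end Conf
end FSFV

namespace FSFV

lemma dc_eq_range (S : Finset ℕ) (h : ∀ m m', m ≤ m' → m' ∈ S → m ∈ S) :
    S = range S.card := by
  ext k
  rw [mem_range]
  constructor
  · intro hk
    have hsub : range (k+1) ⊆ S := by
      intro m hm
      rw [mem_range] at hm
      exact h m k (by omega) hk
    have := card_le_card hsub
    rw [card_range] at this
    omega
  · intro hk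
    by_contra hc
    have hsub : S ⊆ range k := by
      intro m hm
      rw [mem_range]
      by_contra hc'
      exact hc (h k m (by omega) hm)
    have := card_le_card hsub
    rw [card_range] at this
    omega

section Inv
variable {N : ℕ} {lam : ℕ → ℕ} {g : ℕ → ℕ → ℕ}

lemma filt_eq_range (hg : ConfOK N lam g) {t j : ℕ} (ht : 1 ≤ t) :
    (range N).filter (fun m => nuC N g m t < j) =
      range (((range N).filter (fun m => nuC N g m t < j)).card) := by
  apply dc_eq_range
  intro m m' hmm hm'
  rw [mem_filter, mem_range] at hm' ⊢
  refine ⟨by omega, ?_⟩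
  have := nuC_mono hg ht hmm (by omega : m' ≤ N)
  omega

lemma toTab_card {t j : ℕ} (ht1 : 1 ≤ t) (ht2 : t ≤ N) (hj1 : 1 ≤ j) (hj2 : j ≤ lam t) :
    toTab N lam g t j = ((range N).filter (fun m => nuC N g m t < j)).card := by
  rw [toTab, if_pos ⟨ht1, ht2, hj1, hj2⟩]

lemma toTab_ge (hg : ConfOK N lam g) {t j : ℕ} (ht1 : 1 ≤ t) (ht2 : t ≤ N)
    (hj1 : 1 ≤ j) (hj2 : j ≤ lam t) : t ≤ toTab N lam g t j := by
  rw [toTab_card ht1 ht2 hj1 hj2]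
  have hsub : range t ⊆ (range N).filter (fun m => nuC N g m t < j) := by
    intro m hm
    rw [mem_range] at hm
    rw [mem_filter, mem_range]
    refine ⟨by omega, ?_⟩
    rw [nuC_zero hg (by omega) (Or.inl hm)]
    omega
  have := card_le_card hsub
  rw [card_range] at this
  exact this

lemma toTab_le_iff (hg : ConfOK N lam g) {m t j : ℕ} (ht1 : 1 ≤ t) (ht2 : t ≤ N)
    (hj1 : 1 ≤ j) (hj2 : j ≤ lam t) (hm : m ≤ N) :
    toTab N lam g t j ≤ m ↔ j ≤ nuC N g m t := by
  rw [toTab_card ht1 ht2 hj1 hj2]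
  set S := (range N).filter (fun m => nuC N g m t < j) with hS
  have hrange := filt_eq_range hg (j := j) ht1
  rw [← hS] at hrange
  have hcard : S.card ≤ N := by
    have := card_filter_le (range N) (fun m => nuC N g m t < j)
    simpa using this
  constructor
  · intro h
    rcases Nat.eq_or_lt_of_le hm with he | hlt
    · subst he
      rw [nuC_N hg ht1 ht2]
      exact hj2
    · by_contra hc
      push_neg at hc
      have hmS : m ∈ S := by
        rw [hS, mem_filter, mem_range]
        exact ⟨hlt, hc⟩
      rw [hrange, mem_range] at hmS
      omega
  · intro h
    by_contra hc
    push_neg at hc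
    have hmS : m ∈ S := by
      rw [hrange, mem_range]
      exact hc
    rw [hS, mem_filter] at hmS
    omega

lemma toTab_ok (hlam0 : ∀ i : ℕ, i = 0 ∨ N < i → lam i = 0)
    (hlam : ∀ i j : ℕ, 1 ≤ i → i ≤ j → j ≤ N → lam j ≤ lam i)
    (hg : ConfOK N lam g) : TabOK N lam (toTab N lam g) := by
  refine ⟨?_, ?_, ?_, ?_⟩
  · intro i j h
    rw [toTab, if_neg]
    omega
  · intro i hi j hj1 hj2
    rw [mem_Icc] at hi
    refine ⟨?_, ?_⟩
    · have := toTab_ge hg hi.1 hi.2 hj1 hj2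
      omega
    · rw [toTab_card hi.1 hi.2 hj1 hj2]
      have := card_filter_le (range N) (fun m => nuC N g m i < j)
      simpa using this
  · intro i hi j hj1 hj2
    rw [mem_Icc] at hi
    rw [toTab_card hi.1 hi.2 hj1 (by omega), toTab_card hi.1 hi.2 (by omega) hj2]
    apply card_le_card
    intro m hm
    rw [mem_filter] at hm ⊢
    exact ⟨hm.1, by omega⟩
  · intro t ht1 ht2 j hj1 hj2
    have hjt : j ≤ lam t := le_trans hj2 (hlam t (t+1) ht1 (by omega) ht2)
    set c := toTab N lam g (t+1) j with hc
    have hcge : t + 1 ≤ c := toTab_ge hg (by omega) ht2 hj1 hj2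
    have hcle : c ≤ N := by
      rw [hc, toTab_card (by omega) ht2 hj1 hj2]
      have := card_filter_le (range N) (fun m => nuC N g m (t+1) < j)
      simpa using this
    have hnu : j ≤ nuC N g c (t+1) :=
      (toTab_le_iff hg (by omega) ht2 hj1 hj2 hcle).1 (le_refl _)
    have hint : nuC N g c (t+1) ≤ nuC N g (c-1) t := by
      have := nuC_interlace hg ht1 (by omega : t ≤ c - 1) (by omega : (c-1) + 1 ≤ N)
      have e : c - 1 + 1 = c := by omega
      rwa [e] at this
    have : toTab N lam g t j ≤ c - 1 :=
      (toTab_le_iff hg ht1 (by omega) hj1 hjt (by omega)).2 (by omega)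
    omega

end Inv
end FSFV

namespace FSFV
section Inv2
variable {N : ℕ} {lam : ℕ → ℕ} {T : ℕ → ℕ → ℕ} {g : ℕ → ℕ → ℕ}

lemma nuC_toConf (hlam0 : ∀ i : ℕ, i = 0 ∨ N < i → lam i = 0)
    (hlam : ∀ i j : ℕ, 1 ≤ i → i ≤ j → j ≤ N → lam j ≤ lam i)
    (hT : TabOK N lam T) {m t : ℕ} (hm : m ≤ N) :
    nuC N (toConf N lam T) m t = muT lam T m t := by
  rcases Nat.eq_zero_or_pos t with ht0 | ht0
  · subst ht0
    rw [nuC, toConf, if_neg (by omega)]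
    have : lam 0 = 0 := hlam0 0 (Or.inl rfl)
    simp [muT, this]
  rcases Nat.lt_or_ge m t with hlt | hge
  · rw [nuC, toConf, if_neg (by omega), muT_zero hlam0 hlam hT hlt]
    omega
  · rw [nuC, toConf, if_pos (by omega)]
    have e : N - (N - m) = m := by omega
    rw [e]
    omega

lemma left_inv (hlam0 : ∀ i : ℕ, i = 0 ∨ N < i → lam i = 0)
    (hlam : ∀ i j : ℕ, 1 ≤ i → i ≤ j → j ≤ N → lam j ≤ lam i)
    (hT : TabOK N lam T) : toTab N lam (toConf N lam T) = T := by
  funext t j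
  by_cases h : 1 ≤ t ∧ t ≤ N ∧ 1 ≤ j ∧ j ≤ lam t
  · obtain ⟨ht1, ht2, hj1, hj2⟩ := h
    rw [toTab, if_pos ⟨ht1, ht2, hj1, hj2⟩]
    have hfe : (range N).filter (fun m => nuC N (toConf N lam T) m t < j) =
        range (T t j) := by
      ext m
      rw [mem_filter, mem_range, mem_range]
      constructor
      · intro ⟨hmN, hm⟩
        rw [nuC_toConf hlam0 hlam hT (by omega)] at hm
        by_contra hc
        push_neg at hc
        have := (muT_iff hT ht1 ht2 hj1 hj2).1 (le_trans hc (le_refl m))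
        omega
      · intro hm
        have hTN := (hT.2.1 t (mem_Icc.2 ⟨ht1, ht2⟩) j hj1 hj2).2
        refine ⟨by omega, ?_⟩
        rw [nuC_toConf hlam0 hlam hT (by omega)]
        by_contra hc
        push_neg at hc
        have := (muT_iff hT ht1 ht2 hj1 hj2).2 hc
        omega
    rw [hfe, card_range]
  · rw [toTab, if_neg h]
    symm
    apply hT.1
    omega

lemma muT_toTab (hg : ConfOK N lam g) {m t : ℕ} (hm : m ≤ N) (ht1 : 1 ≤ t) (ht2 : t ≤ N) :
    muT lam (toTab N lam g) m t = nuC N g m t := by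
  have hnle : nuC N g m t ≤ lam t := by
    have h1 := nuC_mono hg ht1 hm (le_refl N)
    rw [nuC_N hg ht1 ht2] at h1
    exact h1
  have hfe : (Icc 1 (lam t)).filter (fun j => toTab N lam g t j ≤ m) =
      Icc 1 (nuC N g m t) := by
    ext j
    rw [mem_filter, mem_Icc, mem_Icc]
    constructor
    · intro ⟨⟨hj1, hj2⟩, hle⟩
      exact ⟨hj1, (toTab_le_iff hg ht1 ht2 hj1 hj2 hm).1 hle⟩
    · intro ⟨hj1, hj2⟩
      have hjl : j ≤ lam t := le_trans hj2 hnle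
      exact ⟨⟨hj1, hjl⟩, (toTab_le_iff hg ht1 ht2 hj1 hjl hm).2 hj2⟩
  rw [muT, hfe, Nat.card_Icc]
  omega

lemma right_inv (hg : ConfOK N lam g) : toConf N lam (toTab N lam g) = g := by
  funext k t
  by_cases h : k ≤ N ∧ 1 ≤ t ∧ t ≤ N - k
  · obtain ⟨hk, ht1, ht2⟩ := h
    rw [toConf, if_pos ⟨hk, ht1, ht2⟩]
    rw [muT_toTab hg (by omega) ht1 (by omega)]
    have e := nuC_eq hg ht1 ht2 (by omega : N - k ≤ N)
    have e2 : N - (N - k) = k := by omega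
    rw [e2] at e
    omega
  · rw [toConf, if_neg h]
    symm
    apply hg.1
    omega

end Inv2
end FSFV

namespace FSFV
section Wt
variable {N : ℕ} {lam : ℕ → ℕ} {T : ℕ → ℕ → ℕ} (x y : ℕ → ℂ)

/-- telescoping products over consecutive `Ioc` blocks -/
lemma prod_telescope (f : ℕ → ℂ) (a : ℕ → ℕ) (hmono : ∀ m m', m ≤ m' → a m ≤ a m')
    (s : ℕ) (h1 : 1 ≤ s) :
    ∀ M, s ≤ M →
      (∏ m ∈ Icc s M, ∏ j ∈ Ioc (a (m - 1)) (a m), f j) = ∏ j ∈ Ioc (a (s - 1)) (a M), f j := by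
  intro M
  induction M with
  | zero => intro h; omega
  | succ M ih =>
    intro hsM
    rcases Nat.eq_or_lt_of_le hsM with he | hlt
    · subst he
      rw [Icc_self, prod_singleton]
    · have hsM' : s ≤ M := by omega
      rw [Finset.prod_Icc_succ_top (by omega : s ≤ M + 1), ih hsM']
      have e : M + 1 - 1 = M := by omega
      rw [e]
      exact Finset.prod_Ioc_consecutive f (hmono _ _ (by omega)) (hmono _ _ (by omega))

/-- the inner product over one gap equals the product over boxes of value `m` in row `t` -/
lemma gap_prod (hlam0 : ∀ i : ℕ, i = 0 ∨ N < i → lam i = 0)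
    (hlam : ∀ i j : ℕ, 1 ≤ i → i ≤ j → j ≤ N → lam j ≤ lam i)
    (hT : TabOK N lam T) {m t : ℕ} (ht1 : 1 ≤ t) (htm : t ≤ m) (hm : m ≤ N) :
    (∏ c ∈ Finset.Ioo (toConf N lam T (N + 1 - m) t) (toConf N lam T (N - m) t),
        (x m + y c))
      = ∏ j ∈ Finset.Ioc (muT lam T (m - 1) t) (muT lam T m t),
          (x (T t j) + y (T t j + j - t)) := by
  set a := muT lam T (m - 1) t with ha
  set b := muT lam T m t with hb
  have hab : a ≤ b := muT_mono (by omega)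
  have htN : t ≤ N := le_trans htm hm
  have hIoo : Finset.Ioo (toConf N lam T (N + 1 - m) t) (toConf N lam T (N - m) t)
      = Ioc (a + (m - t)) (b + (m - t)) := by
    have e2 : toConf N lam T (N - m) t = b + (m - t) + 1 := by
      rw [toConf, if_pos (by omega)]
      have e : N - (N - m) = m := by omega
      rw [e, hb]
    rcases Nat.eq_or_lt_of_le htm with he | hlt
    · subst he
      have e1 : toConf N lam T (N + 1 - t) t = 0 := by
        rw [toConf, if_neg]
        omega
      have ha0 : a = 0 := by
        rw [ha]
        exact muT_zero hlam0 hlam hT (by omega)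
      rw [e1, e2, ha0]
      ext c
      rw [Finset.mem_Ioo, Finset.mem_Ioc]
      omega
    · have e1 : toConf N lam T (N + 1 - m) t = a + (m - t) := by
        rw [toConf, if_pos (by omega)]
        have e : N - (N + 1 - m) = m - 1 := by omega
        rw [e, ha]
        omega
      rw [e1, e2]
      ext c
      rw [Finset.mem_Ioo, Finset.mem_Ioc]
      omega
  rw [hIoo]
  have hmap : Ioc (a + (m - t)) (b + (m - t))
      = (Ioc a b).map (addRightEmbedding (m - t)) := by
    rw [Finset.map_add_right_Ioc]
  rw [hmap, Finset.prod_map]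
  apply Finset.prod_congr rfl
  intro j hj
  rw [Finset.mem_Ioc] at hj
  have hj1 : 1 ≤ j := by omega
  have hjb : j ≤ lam t := le_trans hj.2 muT_le
  have hTj : T t j = m := by
    have h1 : T t j ≤ m := (muT_iff hT ht1 htN hj1 hjb).2 hj.2
    have h2 : ¬ T t j ≤ m - 1 := by
      intro hc
      have := (muT_iff hT ht1 htN hj1 hjb).1 hc
      omega
    omega
  have : (addRightEmbedding (m - t)) j = j + (m - t) := rfl
  rw [this, hTj]
  congr 2
  omega

/-- row identity -/
lemma row_prod (hlam0 : ∀ i : ℕ, i = 0 ∨ N < i → lam i = 0)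
    (hlam : ∀ i j : ℕ, 1 ≤ i → i ≤ j → j ≤ N → lam j ≤ lam i)
    (hT : TabOK N lam T) {t : ℕ} (ht1 : 1 ≤ t) (ht2 : t ≤ N) :
    (∏ k ∈ Icc 1 (N - t + 1), ∏ c ∈ Finset.Ioo (toConf N lam T k t)
        (toConf N lam T (k - 1) t), (x (N + 1 - k) + y c))
      = ∏ j ∈ Icc 1 (lam t), (x (T t j) + y (T t j + j - t)) := by
  have step1 : (∏ k ∈ Icc 1 (N - t + 1), ∏ c ∈ Finset.Ioo (toConf N lam T k t)
        (toConf N lam T (k - 1) t), (x (N + 1 - k) + y c))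
      = ∏ m ∈ Icc t N, ∏ c ∈ Finset.Ioo (toConf N lam T (N + 1 - m) t)
        (toConf N lam T (N - m) t), (x m + y c) := by
    apply Finset.prod_nbij' (fun k => N + 1 - k) (fun m => N + 1 - m)
    · intro k hk
      rw [mem_Icc] at hk ⊢
      omega
    · intro m hm
      rw [mem_Icc] at hm ⊢
      omega
    · intro k hk
      rw [mem_Icc] at hk
      omega
    · intro m hm
      rw [mem_Icc] at hm
      omega
    · intro k hk
      rw [mem_Icc] at hk
      have e1 : N + 1 - (N + 1 - k) = k := by omega
      have e2 : N - (N + 1 - k) = k - 1 := by omega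
      rw [e1, e2]
  rw [step1]
  have step2 : (∏ m ∈ Icc t N, ∏ c ∈ Finset.Ioo (toConf N lam T (N + 1 - m) t)
        (toConf N lam T (N - m) t), (x m + y c))
      = ∏ m ∈ Icc t N, ∏ j ∈ Finset.Ioc (muT lam T (m - 1) t) (muT lam T m t),
          (x (T t j) + y (T t j + j - t)) := by
    apply Finset.prod_congr rfl
    intro m hm
    rw [mem_Icc] at hm
    exact gap_prod x y hlam0 hlam hT ht1 hm.1 hm.2
  rw [step2]
  rw [prod_telescope _ (fun m => muT lam T m t) (fun _ _ h => muT_mono h) t ht1 N ht2]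
  have e0 : muT lam T (t - 1) t = 0 := muT_zero hlam0 hlam hT (by omega)
  have eN : muT lam T N t = lam t := muT_N hT ht1 ht2
  rw [e0, eN, ← Finset.Icc_add_one_left_eq_Ioc, zero_add]

lemma confWt_toConf (hlam0 : ∀ i : ℕ, i = 0 ∨ N < i → lam i = 0)
    (hlam : ∀ i j : ℕ, 1 ≤ i → i ≤ j → j ≤ N → lam j ≤ lam i)
    (hT : TabOK N lam T) :
    confWt N x y (toConf N lam T) = tabWt N lam x y T := by
  rw [confWt, tabWt]
  rw [Finset.prod_comm' (t' := Icc 1 N) (s' := fun t => Icc 1 (N - t + 1))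
    (by intro k t; rw [mem_Icc, mem_Icc, mem_Icc, mem_Icc]; omega)]
  apply Finset.prod_congr rfl
  intro t ht
  rw [mem_Icc] at ht
  exact row_prod x y hlam0 hlam hT ht.1 ht.2

end Wt
end FSFV

namespace FSFV

def tabConfEquiv (N : ℕ) (lam : ℕ → ℕ)
    (hlam0 : ∀ i : ℕ, i = 0 ∨ N < i → lam i = 0)
    (hlam : ∀ i j : ℕ, 1 ≤ i → i ≤ j → j ≤ N → lam j ≤ lam i) :
    {T : ℕ → ℕ → ℕ // TabOK N lam T} ≃ {g : ℕ → ℕ → ℕ // ConfOK N lam g} where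
  toFun T := ⟨toConf N lam T.1, toConf_ok hlam0 hlam T.2⟩
  invFun g := ⟨toTab N lam g.1, toTab_ok hlam0 hlam g.2⟩
  left_inv T := Subtype.ext (left_inv hlam0 hlam T.2)
  right_inv g := Subtype.ext (right_inv g.2)

end FSFV

/-- There is a weight-preserving bijection between semistandard Young tableaux
of shape `λ` with entries in `{1,…,N}` and five vertex path configurations as
above; consequently the partition function of the five vertex model equals the
factorial Schur polynomial `s_λ(x|y) = ∑_T ∏_{(i,j)∈λ}(x_{T(i,j)} + y_{T(i,j)+j-i})`. -/
theorem factorial_schur_five_vertex (N : ℕ) (lam : ℕ → ℕ) (x y : ℕ → ℂ)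
    (hlam0 : ∀ i : ℕ, i = 0 ∨ N < i → lam i = 0)
    (hlam : ∀ i j : ℕ, 1 ≤ i → i ≤ j → j ≤ N → lam j ≤ lam i) :
    (∃ e : {T : ℕ → ℕ → ℕ // TabOK N lam T} ≃ {g : ℕ → ℕ → ℕ // ConfOK N lam g},
        ∀ T : {T : ℕ → ℕ → ℕ // TabOK N lam T},
          confWt N x y (e T).1 = tabWt N lam x y T.1) ∧
      (∑' g : {g : ℕ → ℕ → ℕ // ConfOK N lam g}, confWt N x y g.1) =
        ∑' T : {T : ℕ → ℕ → ℕ // TabOK N lam T}, tabWt N lam x y T.1 := by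
  have hwt : ∀ T : {T : ℕ → ℕ → ℕ // TabOK N lam T},
      confWt N x y ((FSFV.tabConfEquiv N lam hlam0 hlam) T).1 = tabWt N lam x y T.1 :=
    fun T => FSFV.confWt_toConf x y hlam0 hlam T.2
  refine ⟨⟨FSFV.tabConfEquiv N lam hlam0 hlam, hwt⟩, ?_⟩
  have h2 : (∑' T : {T : ℕ → ℕ → ℕ // TabOK N lam T},
        confWt N x y ((FSFV.tabConfEquiv N lam hlam0 hlam) T).1) =
      ∑' g : {g : ℕ → ℕ → ℕ // ConfOK N lam g}, confWt N x y g.1 :=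
    Equiv.tsum_eq (FSFV.tabConfEquiv N lam hlam0 hlam)
      (fun g : {g : ℕ → ℕ → ℕ // ConfOK N lam g} => confWt N x y g.1)
  exact h2.symm.trans (tsum_congr hwt)

end
end
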